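/- arXiv:2303.17419 — 12 statements merged into one kernel-verified Lean document; each statement's English description precedes it below -/
import Mathlib

section
/- Let T be a tree. Then no edge contained in some-but-not-all maximum matchings of T shares a vertex with an edge contained in every maximum matching of T. -/
open Finset

/-- A matching of a simple graph: a set of edges of the graph that are pairwise disjoint. -/
def IsMatching {V : Type*} [DecidableEq V] (G : SimpleGraph V) (M : Finset (Sym2 V)) : Prop :=
  (↑M ⊆ G.edgeSet) ∧ ∀ e ∈ M, ∀ f ∈ M, e ≠ f → ∀ v : V, v ∈ e → v ∉ f

/-- A maximum matching: a matching of maximum cardinality. -/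
def IsMaxMatching {V : Type*} [Fintype V] [DecidableEq V] (G : SimpleGraph V)
    (M : Finset (Sym2 V)) : Prop :=
  IsMatching G M ∧ ∀ M' : Finset (Sym2 V), IsMatching G M' → M'.card ≤ M.card

/-- In a tree, an edge contained in some but not all maximum matchings
(an "optional" edge) shares no vertex with an edge contained in every maximum matching
(a "mandatory" edge). -/
theorem stmt1 {V : Type*} [Fintype V] [DecidableEq V] (T : SimpleGraph V) (hT : T.IsTree)
    (e f : Sym2 V)
    (he₁ : ∃ M, IsMaxMatching T M ∧ e ∈ M)
    (he₂ : ∃ M, IsMaxMatching T M ∧ e ∉ M)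
    (hf : ∀ M, IsMaxMatching T M → f ∈ M) :
    ∀ v : V, v ∈ e → v ∉ f := by
  intro v hv hvf
  obtain ⟨M₁, hM₁, heM₁⟩ := he₁
  obtain ⟨M₂, hM₂, heM₂⟩ := he₂
  have hfM₁ : f ∈ M₁ := hf M₁ hM₁
  have hef : e ≠ f := fun h => heM₂ (h ▸ hf M₂ hM₂)
  exact hM₁.1.2 e heM₁ f hfM₁ hef v hv hvf
end

section
/- Let T be a tree in which the distance between any pair of pendant (degree-one) vertices is even. If C is the unique minimum vertex cover of T, then a vertex v is saturated by every maximum matching of T if and only if v ∈ C. -/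
open Finset

/-- A vertex cover: a set of vertices meeting every edge. -/
def IsCover {V : Type*} (G : SimpleGraph V) (C : Finset V) : Prop :=
  ∀ e ∈ G.edgeSet, ∃ v ∈ C, v ∈ e

/-- A minimum vertex cover: a vertex cover of minimum cardinality. -/
def IsMinCover {V : Type*} [Fintype V] (G : SimpleGraph V) (C : Finset V) : Prop :=
  IsCover G C ∧ ∀ C' : Finset V, IsCover G C' → C.card ≤ C'.card

namespace Stmt3Aux

open SimpleGraph Walk
set_option linter.unusedSectionVars false

variable {V : Type*} [DecidableEq V] {T : SimpleGraph V}

/-- In a tree, adjacent vertices have different distances from any fixed vertex. -/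
lemma adj_dist_ne (hT : T.IsTree) (x : V) {u w : V} (h : T.Adj u w) :
    T.dist x u ≠ T.dist x w := by
  intro heq
  have hconn := hT.isConnected
  by_cases h0 : T.dist x u = 0
  · have hxu : x = u := hconn.dist_eq_zero_iff.mp h0
    have hxw : x = w := hconn.dist_eq_zero_iff.mp (by omega)
    exact h.ne (hxu ▸ hxw ▸ rfl)
  · obtain ⟨P, hP, hPl⟩ := hconn.exists_path_of_dist x u
    have hwP : w ∉ P.support := by
      intro hw
      have h1 : T.dist x w ≤ (P.takeUntil w hw).length := SimpleGraph.dist_le _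
      have h2 := congrArg Walk.length (P.take_spec hw)
      rw [Walk.length_append] at h2
      have h3 : (P.dropUntil w hw).length = 0 := by omega
      exact h.ne (Walk.eq_of_length_eq_zero (p := P.dropUntil w hw) h3).symm
    have hWpath : (P.concat h).IsPath := by
      rw [← Walk.isPath_reverse_iff, Walk.reverse_concat, Walk.cons_isPath_iff]
      exact ⟨hP.reverse, by simpa [Walk.support_reverse] using hwP⟩
    obtain ⟨Q, hQ, hQl⟩ := hconn.exists_path_of_dist x w
    have heq2 := (hT.existsUnique_path x w).unique hWpath hQ
    have hl := congrArg Walk.length heq2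
    rw [Walk.length_concat] at hl
    omega

/-- In a tree, a vertex has at most one neighbor strictly closer to a fixed root. -/
lemma parent_unique (hT : T.IsTree) {x s p₁ p₂ : V} (h₁ : T.Adj p₁ s) (h₂ : T.Adj p₂ s)
    (hd₁ : T.dist x s = T.dist x p₁ + 1) (hd₂ : T.dist x s = T.dist x p₂ + 1) : p₁ = p₂ := by
  have hconn := hT.isConnected
  obtain ⟨P₁, hP₁, hl₁⟩ := hconn.exists_path_of_dist x p₁
  obtain ⟨P₂, hP₂, hl₂⟩ := hconn.exists_path_of_dist x p₂
  have hs : ∀ (p : V) (P : T.Walk x p), P.length = T.dist x p →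
      T.dist x s = T.dist x p + 1 → s ∉ P.support := by
    intro p P hl hd hmem
    have ht1 : T.dist x s ≤ (P.takeUntil s hmem).length := SimpleGraph.dist_le _
    have ht2 : (P.takeUntil s hmem).length ≤ P.length := Walk.length_takeUntil_le _ _
    omega
  have hW₁ : (P₁.concat h₁).IsPath := by
    rw [← Walk.isPath_reverse_iff, Walk.reverse_concat, Walk.cons_isPath_iff]
    exact ⟨hP₁.reverse, by
      simpa [Walk.support_reverse] using hs p₁ P₁ hl₁ hd₁⟩
  have hW₂ : (P₂.concat h₂).IsPath := by
    rw [← Walk.isPath_reverse_iff, Walk.reverse_concat, Walk.cons_isPath_iff]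
    exact ⟨hP₂.reverse, by
      simpa [Walk.support_reverse] using hs p₂ P₂ hl₂ hd₂⟩
  have heq := (hT.existsUnique_path x s).unique hW₁ hW₂
  have hsupp := congrArg (fun (q : T.Walk x s) => q.reverse.support) heq
  simp only [Walk.reverse_concat, Walk.support_cons] at hsupp
  rw [Walk.support_eq_cons P₁.reverse, Walk.support_eq_cons P₂.reverse] at hsupp
  simp only [List.cons.injEq] at hsupp
  exact hsupp.2.1

/-- In a connected graph, every vertex other than the root has a parent. -/
lemma exists_parent (hconn : T.Connected) {x s : V} (hne : x ≠ s) :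
    ∃ p, T.Adj p s ∧ T.dist x s = T.dist x p + 1 := by
  obtain ⟨P, hPl⟩ := hconn.exists_walk_length_eq_dist x s
  obtain ⟨p, hadj, P', hP'⟩ := Walk.exists_eq_cons_of_ne (Ne.symm hne) P.reverse
  have hlen : P'.length + 1 = T.dist x s := by
    have := congrArg Walk.length hP'
    rw [Walk.length_reverse, Walk.length_cons] at this
    omega
  have h1 : T.dist x p ≤ P'.length := by
    have := SimpleGraph.dist_le P'.reverse
    rwa [Walk.length_reverse] at this
  have h2 : T.dist x s ≤ T.dist x p + 1 := by
    have ht := hconn.dist_triangle (u := x) (v := p) (w := s)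
    have h3 : T.dist p s = 1 := SimpleGraph.dist_eq_one_iff_adj.mpr hadj.symm
    omega
  exact ⟨p, hadj.symm, by omega⟩

lemma adj_parity (hT : T.IsTree) (x : V) {u w : V} (h : T.Adj u w) :
    T.dist x u % 2 ≠ T.dist x w % 2 := by
  have hne := adj_dist_ne hT x h
  have hd : T.dist u w = 1 := SimpleGraph.dist_eq_one_iff_adj.mpr h
  have hd' : T.dist w u = 1 := SimpleGraph.dist_eq_one_iff_adj.mpr h.symm
  have h1 : T.dist x w ≤ T.dist x u + T.dist u w := hT.isConnected.dist_triangle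
  have h2 : T.dist x u ≤ T.dist x w + T.dist w u := hT.isConnected.dist_triangle
  omega

lemma degree_pos [Fintype V] [DecidableRel T.Adj] (hconn : T.Connected)
    (hcard : 1 < Fintype.card V) (v : V) : 0 < T.degree v := by
  obtain ⟨w, hwv⟩ := Fintype.exists_ne_of_one_lt_card hcard v
  obtain ⟨P⟩ := hconn v w
  obtain ⟨a, hadj, P', hP'⟩ := Walk.exists_eq_cons_of_ne (Ne.symm hwv) P
  exact (T.degree_pos_iff_exists_adj v).mpr ⟨a, hadj⟩

lemma exists_leaf [Fintype V] [DecidableRel T.Adj] (hT : T.IsTree)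
    (hcard : 1 < Fintype.card V) : ∃ x, T.degree x = 1 := by
  by_contra hno
  push_neg at hno
  have hdeg : ∀ v : V, 2 ≤ T.degree v := by
    intro v
    have h1 := degree_pos hT.isConnected hcard v
    have h2 := hno v
    omega
  have hsum := T.sum_degrees_eq_twice_card_edges
  have hcardE := hT.card_edgeFinset
  have hge : 2 * Fintype.card V ≤ ∑ v : V, T.degree v := by
    calc 2 * Fintype.card V = ∑ _v : V, 2 := by
          rw [Finset.sum_const, Finset.card_univ, smul_eq_mul, mul_comm]
      _ ≤ ∑ v : V, T.degree v := Finset.sum_le_sum (fun i _ => hdeg i)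
  omega

section Main

variable [Fintype V] [DecidableRel T.Adj]

/-- The vertices at odd distance from the root leaf. -/
noncomputable def oddSet (T : SimpleGraph V) (ℓ₀ : V) : Finset V :=
  univ.filter (fun u => T.dist ℓ₀ u % 2 = 1)

lemma mem_oddSet {ℓ₀ u : V} : u ∈ oddSet T ℓ₀ ↔ T.dist ℓ₀ u % 2 = 1 := by
  simp [oddSet]

lemma root_notMem_oddSet {ℓ₀ : V} : ℓ₀ ∉ oddSet T ℓ₀ := by
  simp [oddSet, SimpleGraph.dist_self]

lemma cover_oddSet (hT : T.IsTree) (ℓ₀ : V) : IsCover T (oddSet T ℓ₀) := by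
  intro e
  refine Sym2.ind (fun a b he => ?_) e
  rw [SimpleGraph.mem_edgeSet] at he
  have hpar := adj_parity hT ℓ₀ he
  by_cases ha : T.dist ℓ₀ a % 2 = 1
  · exact ⟨a, mem_oddSet.mpr ha, Sym2.mem_mk_left a b⟩
  · have hb : T.dist ℓ₀ b % 2 = 1 := by omega
    exact ⟨b, mem_oddSet.mpr hb, Sym2.mem_mk_right a b⟩

lemma neighbor_notMem_oddSet (hT : T.IsTree) {ℓ₀ a b : V} (ha : a ∈ oddSet T ℓ₀)
    (hab : T.Adj a b) : b ∉ oddSet T ℓ₀ := by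
  rw [mem_oddSet] at ha ⊢
  have := adj_parity hT ℓ₀ hab
  omega

lemma two_le_degree (hT : T.IsTree) (hcard : 1 < Fintype.card V) {ℓ₀ : V}
    (hleaf : T.degree ℓ₀ = 1)
    (hbc : ∀ u v : V, T.degree u = 1 → T.degree v = 1 → Even (T.dist u v))
    {s : V} (hs : s ∈ oddSet T ℓ₀) : 2 ≤ T.degree s := by
  rw [mem_oddSet] at hs
  have h1 := degree_pos hT.isConnected hcard s
  by_contra h
  have hdeg : T.degree s = 1 := by omega
  have heven := hbc ℓ₀ s hleaf hdeg
  rw [Nat.even_iff] at heven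
  omega

lemma expansion (hT : T.IsTree) (hcard : 1 < Fintype.card V) {ℓ₀ : V}
    (hleaf : T.degree ℓ₀ = 1)
    (hbc : ∀ u v : V, T.degree u = 1 → T.degree v = 1 → Even (T.dist u v))
    (S : Finset V) (hSA : S ⊆ oddSet T ℓ₀) (hS : S.Nonempty) :
    S.card + 1 ≤ (S.biUnion (fun s => T.neighborFinset s)).card := by
  have hconn := hT.isConnected
  have hd : ∀ s ∈ S, T.dist ℓ₀ s % 2 = 1 := fun s hs => mem_oddSet.mp (hSA hs)
  have hne : ∀ s ∈ S, ℓ₀ ≠ s := by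
    intro s hs h
    have := hd s hs
    rw [← h, SimpleGraph.dist_self] at this
    omega
  have hpar : ∀ s ∈ S, ∃ p, T.Adj p s ∧ T.dist ℓ₀ s = T.dist ℓ₀ p + 1 :=
    fun s hs => exists_parent (T := T) hconn (hne s hs)
  choose! par hpadj hpdist using hpar
  have hchild : ∀ s ∈ S, ∃ c, T.Adj c s ∧ T.dist ℓ₀ c = T.dist ℓ₀ s + 1 := by
    intro s hs
    have hdeg := two_le_degree hT hcard hleaf hbc (hSA hs)
    have hlt : 1 < (T.neighborFinset s).card := by
      rwa [T.card_neighborFinset_eq_degree]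
    obtain ⟨c, hcmem, hcp⟩ := Finset.exists_mem_ne hlt (par s)
    rw [SimpleGraph.mem_neighborFinset] at hcmem
    have h1 : T.dist ℓ₀ c ≤ T.dist ℓ₀ s + 1 := by
      have ht := hconn.dist_triangle (u := ℓ₀) (v := s) (w := c)
      have := SimpleGraph.dist_eq_one_iff_adj.mpr hcmem
      omega
    have h2 : T.dist ℓ₀ s ≤ T.dist ℓ₀ c + 1 := by
      have ht := hconn.dist_triangle (u := ℓ₀) (v := c) (w := s)
      have := SimpleGraph.dist_eq_one_iff_adj.mpr hcmem.symm
      omega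
    have h3 := adj_dist_ne hT ℓ₀ hcmem
    by_cases hcase : T.dist ℓ₀ s = T.dist ℓ₀ c + 1
    · exact absurd (parent_unique hT hcmem.symm (hpadj s hs) hcase (hpdist s hs)) hcp
    · exact ⟨c, hcmem.symm, by omega⟩
  choose! ch hcadj hcdist using hchild
  obtain ⟨s₀, hs₀, hmin⟩ := S.exists_min_image (fun s => T.dist ℓ₀ s) hS
  have hsub : insert (par s₀) (S.image ch) ⊆ S.biUnion (fun s => T.neighborFinset s) := by
    intro y hy
    rw [Finset.mem_insert] at hy
    rcases hy with rfl | hy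
    · exact Finset.mem_biUnion.mpr
        ⟨s₀, hs₀, (SimpleGraph.mem_neighborFinset _ _ _).mpr (hpadj s₀ hs₀).symm⟩
    · obtain ⟨s, hs, rfl⟩ := Finset.mem_image.mp hy
      exact Finset.mem_biUnion.mpr
        ⟨s, hs, (SimpleGraph.mem_neighborFinset _ _ _).mpr (hcadj s hs).symm⟩
  have hnotin : par s₀ ∉ S.image ch := by
    rw [Finset.mem_image]
    rintro ⟨s, hs, heq⟩
    have h1 := hpdist s₀ hs₀
    have h2 := hcdist s hs
    have h3 := hmin s hs
    rw [heq] at h2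
    omega
  have hinj : Set.InjOn ch S := by
    intro a ha b hb heq
    refine parent_unique hT (x := ℓ₀) (s := ch a) (hcadj a ha).symm ?_ (hcdist a ha) ?_
    · rw [heq]; exact (hcadj b hb).symm
    · rw [heq]; exact hcdist b hb
  calc S.card + 1 = (S.image ch).card + 1 := by rw [Finset.card_image_of_injOn hinj]
    _ = (insert (par s₀) (S.image ch)).card := (Finset.card_insert_of_notMem hnotin).symm
    _ ≤ (S.biUnion (fun s => T.neighborFinset s)).card := Finset.card_le_card hsub


lemma matching_le_cover {M : Finset (Sym2 V)} {C' : Finset V}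
    (hM : IsMatching T M) (hC' : IsCover T C') : M.card ≤ C'.card := by
  classical
  have hex : ∀ e : Sym2 V, ∃ x, e ∈ M → x ∈ C' ∧ x ∈ e := by
    intro e
    by_cases he : e ∈ M
    · obtain ⟨x, hx1, hx2⟩ := hC' e (hM.1 he)
      exact ⟨x, fun _ => ⟨hx1, hx2⟩⟩
    · exact ⟨(Quot.out e).1, fun h => absurd h he⟩
  choose g hg using hex
  apply Finset.card_le_card_of_injOn g (fun e he => (hg e he).1)
  intro e he e' he' heq
  by_contra hne
  exact hM.2 e he e' he' hne (g e) (hg e he).2 (heq ▸ (hg e' he').2)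

lemma matching_avoiding (hT : T.IsTree) (hcard : 1 < Fintype.card V) {ℓ₀ : V}
    (hleaf : T.degree ℓ₀ = 1)
    (hbc : ∀ u v : V, T.degree u = 1 → T.degree v = 1 → Even (T.dist u v))
    (w : V) (hw : w ∉ oddSet T ℓ₀) :
    ∃ M : Finset (Sym2 V), IsMatching T M ∧ M.card = (oddSet T ℓ₀).card ∧
      ∀ e ∈ M, w ∉ e := by
  classical
  have hall : ∀ s : Finset {x // x ∈ oddSet T ℓ₀},
      s.card ≤ (s.biUnion (fun a => T.neighborFinset a.1 \ {w})).card := by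
    intro s
    rcases s.eq_empty_or_nonempty with rfl | hs
    · simp
    have hSA : s.image Subtype.val ⊆ oddSet T ℓ₀ := by
      intro x hx
      obtain ⟨a, _, rfl⟩ := Finset.mem_image.mp hx
      exact a.2
    have hScard : (s.image Subtype.val).card = s.card :=
      Finset.card_image_of_injective _ Subtype.val_injective
    have hexp := expansion hT hcard hleaf hbc (s.image Subtype.val) hSA (hs.image _)
    have hsub : ((s.image Subtype.val).biUnion (fun x => T.neighborFinset x)) \ {w} ⊆
        s.biUnion (fun a => T.neighborFinset a.1 \ {w}) := by
      intro y hy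
      rw [Finset.mem_sdiff] at hy
      obtain ⟨hy1, hy2⟩ := hy
      obtain ⟨x, hx, hyx⟩ := Finset.mem_biUnion.mp hy1
      obtain ⟨a, ha, rfl⟩ := Finset.mem_image.mp hx
      exact Finset.mem_biUnion.mpr ⟨a, ha, Finset.mem_sdiff.mpr ⟨hyx, hy2⟩⟩
    have h1 := Finset.card_le_card hsub
    have h2 := Finset.card_le_card_sdiff_add_card
      (s := (s.image Subtype.val).biUnion (fun x => T.neighborFinset x)) (t := {w})
    have h3 : ({w} : Finset V).card = 1 := Finset.card_singleton w
    omega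
  obtain ⟨f, hfinj, hfmem⟩ :=
    (Finset.all_card_le_biUnion_card_iff_exists_injective
      (fun a : {x // x ∈ oddSet T ℓ₀} => T.neighborFinset a.1 \ {w})).mp hall
  have hfadj : ∀ a : {x // x ∈ oddSet T ℓ₀}, T.Adj a.1 (f a) := by
    intro a
    have := hfmem a
    rw [Finset.mem_sdiff, SimpleGraph.mem_neighborFinset] at this
    exact this.1
  have hfw : ∀ a : {x // x ∈ oddSet T ℓ₀}, f a ≠ w := by
    intro a
    have := hfmem a
    rw [Finset.mem_sdiff, Finset.mem_singleton] at this
    exact this.2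
  have hfA : ∀ a : {x // x ∈ oddSet T ℓ₀}, f a ∉ oddSet T ℓ₀ :=
    fun a => neighbor_notMem_oddSet hT a.2 (hfadj a)
  refine ⟨(oddSet T ℓ₀).attach.image (fun a => s(a.1, f a)), ⟨?_, ?_⟩, ?_, ?_⟩
  · intro e he
    rw [Finset.mem_coe, Finset.mem_image] at he
    obtain ⟨a, _, rfl⟩ := he
    exact (SimpleGraph.mem_edgeSet T).mpr (hfadj a)
  · intro e he e' he' hne x hx hx'
    rw [Finset.mem_image] at he he'
    obtain ⟨a, _, rfl⟩ := he
    obtain ⟨b, _, rfl⟩ := he'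
    rw [Sym2.mem_iff] at hx hx'
    rcases hx with rfl | rfl <;> rcases hx' with h | h
    · exact hne (by rw [Subtype.ext h])
    · exact hfA b (by rw [← h]; exact a.2)
    · exact hfA a (by rw [h]; exact b.2)
    · exact hne (by rw [hfinj h])
  · rw [Finset.card_image_of_injOn, Finset.card_attach]
    intro a _ b _ heq
    rw [Sym2.eq_iff] at heq
    rcases heq with ⟨h1, _⟩ | ⟨h1, h2⟩
    · exact Subtype.ext h1
    · exact absurd (show (f b : V) ∈ oddSet T ℓ₀ by rw [← h1]; exact a.2) (hfA b)
  · intro e he hwe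
    rw [Finset.mem_image] at he
    obtain ⟨a, _, rfl⟩ := he
    rw [Sym2.mem_iff] at hwe
    rcases hwe with rfl | h
    · exact hw a.2
    · exact hfw a h.symm

end Main

end Stmt3Aux

/-- In a tree whose pendant vertices are pairwise at even distance (a bc-tree),
with unique minimum vertex cover C, a vertex is saturated by every maximum matching iff it
belongs to C. -/
theorem stmt3 {V : Type*} [Fintype V] [DecidableEq V] (T : SimpleGraph V)
    [DecidableRel T.Adj] (hT : T.IsTree)
    (hbc : ∀ u v : V, T.degree u = 1 → T.degree v = 1 → Even (T.dist u v))
    (C : Finset V) (hC : IsMinCover T C) (huniq : ∀ C' : Finset V, IsMinCover T C' → C' = C)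
    (v : V) :
    (∀ M : Finset (Sym2 V), IsMaxMatching T M → ∃ e ∈ M, v ∈ e) ↔ v ∈ C := by
  classical
  by_cases hcard : Fintype.card V ≤ 1
  · -- trivial case: no edges
    have hsub : Subsingleton V := Fintype.card_le_one_iff_subsingleton.mp hcard
    have hE : ∀ e : Sym2 V, e ∉ T.edgeSet := by
      intro e
      refine Sym2.ind (fun a b hab => ?_) e
      rw [SimpleGraph.mem_edgeSet] at hab
      exact hab.ne (Subsingleton.elim a b)
    have hCov : IsCover T ∅ := fun e he => absurd he (hE e)
    have hC0 : C = ∅ := by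
      have := hC.2 ∅ hCov
      simpa using this
    have hM0 : IsMaxMatching T ∅ := by
      refine ⟨⟨by simp, by simp⟩, ?_⟩
      intro M' hM'
      have hM'0 : M' = ∅ := Finset.eq_empty_of_forall_notMem (fun e he => hE e (hM'.1 he))
      simp [hM'0]
    constructor
    · intro h
      obtain ⟨e, he, _⟩ := h ∅ hM0
      simp at he
    · intro hv
      rw [hC0] at hv
      simp at hv
  · push_neg at hcard
    obtain ⟨ℓ₀, hleaf⟩ := Stmt3Aux.exists_leaf hT hcard
    have hcov := Stmt3Aux.cover_oddSet hT ℓ₀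
    have hminA : IsMinCover T (Stmt3Aux.oddSet T ℓ₀) := by
      refine ⟨hcov, ?_⟩
      intro C' hC'
      obtain ⟨M₀, hM₀, hM₀card, _⟩ :=
        Stmt3Aux.matching_avoiding hT hcard hleaf hbc ℓ₀ Stmt3Aux.root_notMem_oddSet
      calc (Stmt3Aux.oddSet T ℓ₀).card = M₀.card := hM₀card.symm
        _ ≤ C'.card := Stmt3Aux.matching_le_cover hM₀ hC'
    have hAC : Stmt3Aux.oddSet T ℓ₀ = C := huniq _ hminA
    constructor
    · intro h
      by_contra hv
      rw [← hAC] at hv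
      obtain ⟨M, hM, hMcard, hMavoid⟩ :=
        Stmt3Aux.matching_avoiding hT hcard hleaf hbc v hv
      have hmax : IsMaxMatching T M := by
        refine ⟨hM, ?_⟩
        intro M' hM'
        calc M'.card ≤ (Stmt3Aux.oddSet T ℓ₀).card := Stmt3Aux.matching_le_cover hM' hcov
          _ = M.card := hMcard.symm
      obtain ⟨e, he, hve⟩ := h M hmax
      exact hMavoid e he hve
    · intro hv M hM
      rw [← hAC] at hv
      obtain ⟨M₀, hM₀, hM₀card, _⟩ :=
        Stmt3Aux.matching_avoiding hT hcard hleaf hbc ℓ₀ Stmt3Aux.root_notMem_oddSet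
      have h1 : (Stmt3Aux.oddSet T ℓ₀).card ≤ M.card := hM₀card ▸ hM.2 M₀ hM₀
      have hex : ∀ e : Sym2 V, ∃ x, e ∈ M → x ∈ Stmt3Aux.oddSet T ℓ₀ ∧ x ∈ e := by
        intro e
        by_cases he : e ∈ M
        · obtain ⟨x, hx1, hx2⟩ := hcov e (hM.1.1 he)
          exact ⟨x, fun _ => ⟨hx1, hx2⟩⟩
        · exact ⟨(Quot.out e).1, fun h => absurd h he⟩
      choose g hg using hex
      have hinj : Set.InjOn g M := by
        intro e he e' he' heq
        by_contra hne
        exact hM.1.2 e he e' he' hne (g e) (hg e he).2 (heq ▸ (hg e' he').2)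
      have hsubA : M.image g ⊆ Stmt3Aux.oddSet T ℓ₀ := by
        intro y hy
        obtain ⟨e, he, rfl⟩ := Finset.mem_image.mp hy
        exact (hg e he).1
      have hcardim : (M.image g).card = M.card := Finset.card_image_of_injOn hinj
      have himg : M.image g = Stmt3Aux.oddSet T ℓ₀ :=
        Finset.eq_of_subset_of_card_le hsubA (by omega)
      rw [← himg] at hv
      obtain ⟨e, he, hge⟩ := Finset.mem_image.mp hv
      exact ⟨e, he, hge ▸ (hg e he).2⟩
end

section
/- Let G be a graph and S a subset of its vertices. If S1 and S2 are both sets obtained from S by repeatedly applying the skew zero forcing rule until no further applications are possible, then S1 = S2. That is, the skew zero forcing closure is well-defined. -/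
/-- One application of the skew zero forcing rule: some vertex `v` has exactly one
neighbor `w` outside the filled set `S`, and `w` becomes filled. -/
def SZFStep {V : Type*} (G : SimpleGraph V) (S T : Set V) : Prop :=
  ∃ v w : V, G.Adj v w ∧ w ∉ S ∧ (∀ u : V, G.Adj v u → u ∉ S → u = w) ∧ T = insert w S

/-- A set is stalled (skew zero forcing closed) if no vertex has exactly one neighbor
outside the set, i.e. the skew zero forcing rule cannot be applied. -/
def SZFStalled {V : Type*} (G : SimpleGraph V) (S : Set V) : Prop :=
  ∀ v w : V, G.Adj v w → w ∉ S → ∃ u : V, G.Adj v u ∧ u ∉ S ∧ u ≠ w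

/-- `T` is a skew derived set of `S`: obtained from `S` by repeatedly applying the
skew zero forcing rule until no more applications are possible. -/
def SZFDerived {V : Type*} (G : SimpleGraph V) (S T : Set V) : Prop :=
  Relation.ReflTransGen (SZFStep G) S T ∧ SZFStalled G T

lemma szf_le {V : Type*} (G : SimpleGraph V) {S T : Set V}
    (h : Relation.ReflTransGen (SZFStep G) S T) : S ⊆ T := by
  induction h with
  | refl => exact le_refl _
  | tail _ hstep ih =>
    obtain ⟨v, w, _, _, _, rfl⟩ := hstep
    exact ih.trans (Set.subset_insert _ _)

lemma szf_mono {V : Type*} (G : SimpleGraph V) {S T U : Set V}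
    (h : Relation.ReflTransGen (SZFStep G) S T) (hSU : S ⊆ U)
    (hU : SZFStalled G U) : T ⊆ U := by
  induction h with
  | refl => exact hSU
  | tail _ hstep ih =>
    obtain ⟨v, w, hvw, hwS, huniq, rfl⟩ := hstep
    intro x hx
    rcases hx with rfl | hx
    · by_contra hwU
      obtain ⟨u, hvu, huU, hne⟩ := hU v x hvw hwU
      exact hne (huniq u hvu (fun h => huU (ih h)))
    · exact ih hx

/-- Any two skew derived sets of the same initial set coincide, i.e. the
skew zero forcing closure is well-defined. -/
theorem stmt4 {V : Type*} [Fintype V] (G : SimpleGraph V) (S S₁ S₂ : Set V)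
    (h₁ : SZFDerived G S S₁) (h₂ : SZFDerived G S S₂) : S₁ = S₂ := by
  exact Set.Subset.antisymm
    (szf_mono G h₁.1 (szf_le G h₂.1) h₂.2)
    (szf_mono G h₂.1 (szf_le G h₁.1) h₁.2)
end

section
/- Let T be a tree. A set S ⊆ V(T) is skew zero forcing closed if and only if there exists a vector x in the kernel of the adjacency matrix of T whose set of zero coordinates is exactly S. -/
open Matrix

namespace SZF6

open SimpleGraph Finset

variable {V : Type*} (T : SimpleGraph V)

lemma path_length (hT : T.IsTree) {a b : V} (p : T.Walk a b) (hp : p.IsPath) :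
    p.length = T.dist a b := by
  obtain ⟨q, hq, hql⟩ := hT.isConnected.exists_path_of_dist a b
  rw [(hT.existsUnique_path a b).unique hp hq, hql]

lemma concat_isPath (hT : T.IsTree) {a b c : V} {p : T.Walk a b} (hp : p.IsPath)
    (h : T.Adj b c) (hc : c ∉ p.support) : (p.concat h).IsPath := by
  rw [← SimpleGraph.Walk.isPath_reverse_iff, SimpleGraph.Walk.reverse_concat]
  rw [SimpleGraph.Walk.cons_isPath_iff]
  refine ⟨SimpleGraph.Walk.isPath_reverse_iff _ |>.mpr hp, ?_⟩
  rwa [SimpleGraph.Walk.support_reverse, List.mem_reverse]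

lemma exists_parent (hT : T.IsTree) (r : V) {v : V} (hv : v ≠ r) :
    ∃ p, T.Adj v p ∧ T.dist r p + 1 = T.dist r v := by
  obtain ⟨w, hw⟩ := hT.isConnected.exists_walk_length_eq_dist v r
  cases w with
  | nil => exact absurd rfl hv
  | cons h q =>
    rename_i b
    refine ⟨b, h, ?_⟩
    have h1 : T.dist b r ≤ q.length := SimpleGraph.dist_le q
    have hw' : q.length + 1 = T.dist v r := by
      simpa [SimpleGraph.Walk.length_cons] using hw
    have h2 : T.dist r v ≤ T.dist r b + T.dist b v := hT.isConnected.dist_triangle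
    have h3 : T.dist b v = 1 := SimpleGraph.dist_eq_one_iff_adj.mpr h.symm
    have h4 : T.dist r b = T.dist b r := SimpleGraph.dist_comm
    have h5 : T.dist r v = T.dist v r := SimpleGraph.dist_comm
    omega


/-- The parent of `v` in the tree rooted at `r`. -/
noncomputable def parent (r v : V) : V :=
  @Classical.epsilon V ⟨v⟩ fun p => T.Adj v p ∧ T.dist r p + 1 = T.dist r v

lemma parent_spec (hT : T.IsTree) (r : V) {v : V} (hv : v ≠ r) :
    T.Adj v (parent T r v) ∧ T.dist r (parent T r v) + 1 = T.dist r v :=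
  Classical.epsilon_spec (exists_parent T hT r hv)

variable [DecidableEq V]

lemma adj_dist_cases (hT : T.IsTree) (r : V) {v w : V} (h : T.Adj v w) :
    T.dist r w = T.dist r v + 1 ∨ T.dist r v = T.dist r w + 1 := by
  have hvw : T.dist r w ≤ T.dist r v + 1 := by
    have := hT.isConnected.dist_triangle (u := r) (v := v) (w := w)
    rwa [SimpleGraph.dist_eq_one_iff_adj.mpr h] at this
  have hwv : T.dist r v ≤ T.dist r w + 1 := by
    have := hT.isConnected.dist_triangle (u := r) (v := w) (w := v)
    rwa [SimpleGraph.dist_eq_one_iff_adj.mpr h.symm] at this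
  have hne : T.dist r w ≠ T.dist r v := by
    intro he
    obtain ⟨P, hP, hPl⟩ := hT.isConnected.exists_path_of_dist r v
    have hwP : w ∉ P.support := by
      intro hmem
      have h1 : (P.takeUntil w hmem).length = T.dist r w :=
        path_length T hT _ (hP.takeUntil hmem)
      have h2 := P.take_spec hmem
      have h3 : (P.takeUntil w hmem).length + (P.dropUntil w hmem).length = P.length := by
        rw [← SimpleGraph.Walk.length_append, h2]
      have h4 : (P.dropUntil w hmem).length = 0 := by omega
      have h5 : w = v := SimpleGraph.Walk.eq_of_length_eq_zero h4
      exact T.irrefl (h5 ▸ h)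
    have hP' : (P.concat h).IsPath := concat_isPath T hT hP h hwP
    have := path_length T hT _ hP'
    rw [SimpleGraph.Walk.length_concat, hPl, he] at this
    omega
  omega

lemma eq_parent (hT : T.IsTree) (r : V) {v p : V} (h : T.Adj v p)
    (hd : T.dist r p + 1 = T.dist r v) : p = parent T r v := by
  have hv : v ≠ r := by
    intro he
    rw [he, SimpleGraph.dist_self] at hd
    omega
  obtain ⟨ha, hd'⟩ := parent_spec T hT r hv
  obtain ⟨P, hP, hPl⟩ := hT.isConnected.exists_path_of_dist r p
  obtain ⟨Q, hQ, hQl⟩ := hT.isConnected.exists_path_of_dist r (parent T r v)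
  have hvP : v ∉ P.support := by
    intro hmem
    have h1 : (P.takeUntil v hmem).length = T.dist r v :=
      path_length T hT _ (hP.takeUntil hmem)
    have h2 := P.length_takeUntil_le hmem
    omega
  have hvQ : v ∉ Q.support := by
    intro hmem
    have h1 : (Q.takeUntil v hmem).length = T.dist r v :=
      path_length T hT _ (hQ.takeUntil hmem)
    have h2 := Q.length_takeUntil_le hmem
    omega
  have e1 : (P.concat h.symm).IsPath := concat_isPath T hT hP h.symm hvP
  have e2 : (Q.concat ha.symm).IsPath := concat_isPath T hT hQ ha.symm hvQ
  have heq := (hT.existsUnique_path r v).unique e1 e2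
  obtain ⟨hv', _⟩ := SimpleGraph.Walk.concat_inj heq
  exact hv'

variable [Fintype V] [DecidableEq V] [DecidableRel T.Adj]

/-- auxiliary nonzero scalar -/
noncomputable def aval (k : ℕ) (t : ℝ) : ℝ := if t = (k : ℝ) - 1 then 2 else 1

lemma aval_ne_zero (k : ℕ) (t : ℝ) : aval k t ≠ 0 := by
  unfold aval; split <;> norm_num

/-- assigns values to elements of `K` that are all nonzero and sum to `t`. -/
noncomputable def assign (K : Finset V) (t : ℝ) : V → ℝ := fun w =>
  if hK : K.Nonempty then
    if w ∈ K then
      if w = hK.choose then t - ((K.card : ℝ) - 1) * aval K.card t else aval K.card t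
    else 0
  else 0

lemma assign_sum (K : Finset V) (t : ℝ) (h : t ≠ 0 → K.Nonempty) :
    ∑ w ∈ K, assign K t w = t := by
  by_cases hK : K.Nonempty
  · have hw0K : hK.choose ∈ K := hK.choose_spec
    rw [← Finset.add_sum_erase _ _ hw0K]
    have h1 : assign K t hK.choose = t - ((K.card : ℝ) - 1) * aval K.card t := by
      simp [assign, hK, hw0K]
    have h2 : ∀ w ∈ K.erase hK.choose, assign K t w = aval K.card t := by
      intro w hw
      have hm := Finset.mem_of_mem_erase hw
      have hne := Finset.ne_of_mem_erase hw
      simp [assign, hK, hm, hne]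
    rw [Finset.sum_congr rfl h2, Finset.sum_const, Finset.card_erase_of_mem hw0K,
      nsmul_eq_mul]
    have hcard : 1 ≤ K.card := Finset.card_pos.mpr hK
    rw [h1, Nat.cast_sub hcard]
    push_cast
    ring
  · have ht : t = 0 := by
      by_contra ht
      exact hK (h ht)
    simp [Finset.not_nonempty_iff_eq_empty.mp hK, ht]

lemma assign_ne_zero {K : Finset V} {t : ℝ} {w : V} (hw : w ∈ K)
    (h1 : K.card = 1 → t ≠ 0) : assign K t w ≠ 0 := by
  have hK : K.Nonempty := ⟨w, hw⟩
  by_cases he : w = hK.choose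
  · have hval : assign K t w = t - ((K.card : ℝ) - 1) * aval K.card t := by
      subst he
      simp [assign, hK, hK.choose_spec]
    rw [hval]
    rcases Nat.lt_or_ge K.card 2 with hc | hc
    · have hc1 : K.card = 1 := by
        have := Finset.card_pos.mpr hK; omega
      rw [hc1]
      simpa using h1 hc1
    · have hge : (2 : ℝ) ≤ (K.card : ℝ) := by exact_mod_cast hc
      unfold aval
      split_ifs with ht
      · rw [ht]
        intro hcon
        nlinarith
      · intro hcon
        apply ht
        linarith
  · have hval : assign K t w = aval K.card t := by
      simp [assign, hK, hw, he]
    rw [hval]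
    exact aval_ne_zero _ _

/-- The children of `v` outside `S` in the tree rooted at `r`. -/
noncomputable def kids (r : V) (S : Set V) (v : V) : Finset V :=
  @Finset.filter _ (fun w => T.Adj v w ∧ T.dist r w = T.dist r v + 1 ∧ w ∉ S)
    (Classical.decPred _) Finset.univ

lemma mem_kids {r : V} {S : Set V} {v w : V} :
    w ∈ kids T r S v ↔ T.Adj v w ∧ T.dist r w = T.dist r v + 1 ∧ w ∉ S := by
  unfold kids
  rw [@Finset.mem_filter _ _ (Classical.decPred _)]
  simp

open scoped Classical in
/-- The kernel vector. -/
noncomputable def xval (hT : T.IsTree) (r : V) (S : Set V) (v : V) : ℝ :=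
  if v ∈ S then 0
  else if hv : v = r then 1
  else if hp : parent T r v = r then
    assign (kids T r S (parent T r v)) 0 v
  else if parent T r (parent T r v) ∈ S then
    assign (kids T r S (parent T r v)) 0 v
  else
    assign (kids T r S (parent T r v)) (-(xval hT r S (parent T r (parent T r v)))) v
termination_by T.dist r v
decreasing_by
  have h1 := (parent_spec T hT r hv).2
  have h2 := (parent_spec T hT r hp).2
  omega

open scoped Classical in
/-- The target value for the children of `p`. -/
noncomputable def tval (hT : T.IsTree) (r : V) (S : Set V) (p : V) : ℝ :=
  if p = r then 0 else if parent T r p ∈ S then 0 else -(xval T hT r S (parent T r p))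

lemma xval_mem (hT : T.IsTree) (r : V) {S : Set V} {v : V} (h : v ∈ S) :
    xval T hT r S v = 0 := by
  rw [xval]
  simp [h]

lemma xval_root (hT : T.IsTree) (r : V) {S : Set V} (h : r ∉ S) :
    xval T hT r S r = 1 := by
  rw [xval]
  simp [h]

lemma xval_of (hT : T.IsTree) (r : V) {S : Set V} {v : V} (h : v ∉ S) (hv : v ≠ r) :
    xval T hT r S v
      = assign (kids T r S (parent T r v)) (tval T hT r S (parent T r v)) v := by
  conv_lhs => rw [xval]
  rw [if_neg h, dif_neg hv, tval]
  split_ifs <;> rfl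

lemma xval_ne_zero (hT : T.IsTree) (r : V) (S : Set V) (hS : SZFStalled T S) :
    ∀ v, v ∉ S → xval T hT r S v ≠ 0 := by
  suffices H : ∀ n v, T.dist r v = n → v ∉ S → xval T hT r S v ≠ 0 by
    exact fun v hv => H _ v rfl hv
  intro n
  induction n using Nat.strong_induction_on with
  | _ n IH =>
    intro v hd hv
    by_cases hr : v = r
    · rw [hr] at hv ⊢
      rw [xval_root T hT r hv]
      norm_num
    · rw [xval_of T hT r hv hr]
      have hps := parent_spec T hT r hr
      set p := parent T r v with hpdef
      have hvk : v ∈ kids T r S p := (mem_kids T).mpr ⟨hps.1.symm, by omega, hv⟩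
      refine assign_ne_zero hvk ?_
      intro hc1
      have hK : kids T r S p = {v} := by
        obtain ⟨a, ha⟩ := Finset.card_eq_one.mp hc1
        rw [ha] at hvk ⊢
        rw [Finset.mem_singleton] at hvk
        rw [hvk]
      obtain ⟨u, hpu, huS, huv⟩ := hS p v hps.1.symm hv
      have hucase := adj_dist_cases T hT r hpu
      rw [tval]
      split_ifs with hpr hpps
      · exfalso
        have hdp : T.dist r p = 0 := by rw [hpr, SimpleGraph.dist_self]
        have hdu : T.dist r u = T.dist r p + 1 := by omega
        have : u ∈ kids T r S p := (mem_kids T).mpr ⟨hpu, hdu, huS⟩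
        rw [hK, Finset.mem_singleton] at this
        exact huv this
      · exfalso
        rcases hucase with hdu | hdu
        · have : u ∈ kids T r S p := (mem_kids T).mpr ⟨hpu, hdu, huS⟩
          rw [hK, Finset.mem_singleton] at this
          exact huv this
        · have : u = parent T r p := eq_parent T hT r hpu (by omega)
          exact huS (this ▸ hpps)
      · have hdpp := (parent_spec T hT r hpr).2
        have := IH (T.dist r (parent T r p)) (by omega) _ rfl hpps
        simpa using this

lemma xval_sum_kids (hT : T.IsTree) (r : V) (S : Set V) (hS : SZFStalled T S) (v : V) :
    ∑ w ∈ kids T r S v, xval T hT r S w = tval T hT r S v := by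
  have hstep : ∀ w ∈ kids T r S v,
      xval T hT r S w = assign (kids T r S v) (tval T hT r S v) w := by
    intro w hw
    obtain ⟨haw, hdw, hwS⟩ := (mem_kids T).mp hw
    have hwr : w ≠ r := by
      intro he
      rw [he, SimpleGraph.dist_self] at hdw
      omega
    rw [xval_of T hT r hwS hwr]
    have hpw : parent T r w = v := (eq_parent T hT r haw.symm (by omega)).symm
    rw [hpw]
  rw [Finset.sum_congr rfl hstep]
  apply assign_sum
  intro ht
  rw [tval] at ht
  split_ifs at ht with h1 h2
  · exact absurd rfl ht
  · exact absurd rfl ht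
  · have hps := parent_spec T hT r h1
    obtain ⟨u, hvu, huS, hup⟩ := hS v (parent T r v) hps.1 h2
    rcases adj_dist_cases T hT r hvu with hdu | hdu
    · exact ⟨u, (mem_kids T).mpr ⟨hvu, hdu, huS⟩⟩
    · exact absurd (eq_parent T hT r hvu (by omega)) hup

lemma xval_kernel (hT : T.IsTree) (r : V) (S : Set V) (hS : SZFStalled T S) (v : V) :
    ∑ w ∈ T.neighborFinset v, xval T hT r S w = 0 := by
  classical
  set K := kids T r S v with hKdef
  rw [← Finset.sum_filter_add_sum_filter_not (T.neighborFinset v) (· ∈ K)]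
  have hKsub : Finset.filter (· ∈ K) (T.neighborFinset v) = K := by
    ext w
    rw [Finset.mem_filter]
    constructor
    · exact fun h => h.2
    · intro h
      exact ⟨(T.mem_neighborFinset _ _).mpr ((mem_kids T).mp (hKdef ▸ h)).1, h⟩
  rw [hKsub, xval_sum_kids T hT r S hS v]
  by_cases hr : v = r
  · have hrem : ∀ w ∈ Finset.filter (· ∉ K) (T.neighborFinset v), xval T hT r S w = 0 := by
      intro w hw
      rw [Finset.mem_filter, SimpleGraph.mem_neighborFinset] at hw
      obtain ⟨haw, hnK⟩ := hw
      rcases adj_dist_cases T hT r haw with hd | hd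
      · by_cases hwS : w ∈ S
        · exact xval_mem T hT r hwS
        · exact absurd ((mem_kids T).mpr ⟨haw, hd, hwS⟩) hnK
      · exfalso
        subst hr
        rw [SimpleGraph.dist_self] at hd
        omega
    rw [Finset.sum_eq_zero hrem, tval, if_pos hr]
    ring
  · have hps := parent_spec T hT r hr
    have hprem : ∀ w ∈ Finset.filter (· ∉ K) (T.neighborFinset v), w ≠ parent T r v →
        xval T hT r S w = 0 := by
      intro w hw hwp
      rw [Finset.mem_filter, SimpleGraph.mem_neighborFinset] at hw
      obtain ⟨haw, hnK⟩ := hw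
      rcases adj_dist_cases T hT r haw with hd | hd
      · by_cases hwS : w ∈ S
        · exact xval_mem T hT r hwS
        · exact absurd ((mem_kids T).mpr ⟨haw, hd, hwS⟩) hnK
      · exact absurd (eq_parent T hT r haw (by omega)) hwp
    by_cases hpS : parent T r v ∈ S
    · have hall : ∀ w ∈ Finset.filter (· ∉ K) (T.neighborFinset v), xval T hT r S w = 0 := by
        intro w hw
        by_cases hwp : w = parent T r v
        · subst hwp
          exact xval_mem T hT r hpS
        · exact hprem w hw hwp
      rw [Finset.sum_eq_zero hall, tval, if_neg hr, if_pos hpS]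
      ring
    · have hpmem : parent T r v ∈ Finset.filter (· ∉ K) (T.neighborFinset v) := by
        rw [Finset.mem_filter, SimpleGraph.mem_neighborFinset]
        refine ⟨hps.1, ?_⟩
        intro hmem
        have := ((mem_kids T).mp (hKdef ▸ hmem)).2.1
        omega
      rw [Finset.sum_eq_single_of_mem _ hpmem (fun w hw hwp => hprem w hw hwp)]
      rw [tval, if_neg hr, if_neg hpS]
      ring

end SZF6

/-- For a tree T, a set S of vertices is skew zero forcing closed iff S is the
zero locus of some vector in the kernel of the adjacency matrix of T. -/
theorem stmt6 {V : Type*} [Fintype V] [DecidableEq V] (T : SimpleGraph V)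
    [DecidableRel T.Adj] (hT : T.IsTree) (S : Set V) :
    SZFStalled T S ↔ ∃ x : V → ℝ, T.adjMatrix ℝ *ᵥ x = 0 ∧ {v : V | x v = 0} = S := by
  classical
  constructor
  · intro hS
    have hne : Nonempty V := hT.isConnected.nonempty
    obtain ⟨r⟩ := hne
    refine ⟨SZF6.xval T hT r S, ?_, ?_⟩
    · funext v
      rw [SimpleGraph.adjMatrix_mulVec_apply]
      simpa using SZF6.xval_kernel T hT r S hS v
    · ext v
      simp only [Set.mem_setOf_eq]
      constructor
      · intro h
        by_contra hv
        exact SZF6.xval_ne_zero T hT r S hS v hv h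
      · exact fun h => SZF6.xval_mem T hT r h
  · rintro ⟨x, hker, hzero⟩ v w hvw hwS
    have hxw : x w ≠ 0 := by
      intro h
      exact hwS (hzero ▸ (Set.mem_setOf_eq ▸ h))
    by_contra hcon
    push_neg at hcon
    have hsum : ∑ u ∈ T.neighborFinset v, x u = 0 := by
      have := congrFun hker v
      rwa [SimpleGraph.adjMatrix_mulVec_apply] at this
    have hw : w ∈ T.neighborFinset v := (T.mem_neighborFinset _ _).mpr hvw
    have hsingle : ∑ u ∈ T.neighborFinset v, x u = x w := by
      apply Finset.sum_eq_single_of_mem _ hw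
      intro u hu hune
      by_cases huS : u ∈ S
      · have : u ∈ {v | x v = 0} := hzero ▸ huS
        exact this
      · exact absurd (hcon u ((T.mem_neighborFinset _ _).mp hu) huS) hune
    rw [hsingle] at hsum
    exact hxw hsum
end

section
/- Let G be a graph and X1, X2 realizable subsets of V(G), i.e., each is the zero locus of some real nullvector of the adjacency matrix of G. Then X1 ∩ X2 is realizable. -/
open Matrix

/-- A set of vertices is realizable if it is the zero locus of some real nullvector of the
adjacency matrix. -/
def Realizable {V : Type*} [Fintype V] [DecidableEq V] (G : SimpleGraph V)
    [DecidableRel G.Adj] (S : Set V) : Prop :=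
  ∃ x : V → ℝ, G.adjMatrix ℝ *ᵥ x = 0 ∧ {v : V | x v = 0} = S

/-- The intersection of two realizable sets is realizable. -/
theorem stmt8 {V : Type*} [Fintype V] [DecidableEq V] (G : SimpleGraph V)
    [DecidableRel G.Adj] (X₁ X₂ : Set V)
    (h₁ : Realizable G X₁) (h₂ : Realizable G X₂) : Realizable G (X₁ ∩ X₂) := by
  obtain ⟨x, hx0, hxZ⟩ := h₁
  obtain ⟨y, hy0, hyZ⟩ := h₂
  obtain ⟨r, hr⟩ := Infinite.exists_notMem_finset
    (Finset.image (fun v => -y v / x v) Finset.univ)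
  refine ⟨r • x + y, ?_, ?_⟩
  · rw [mulVec_add, mulVec_smul, hx0, hy0, smul_zero, add_zero]
  · rw [← hxZ, ← hyZ]
    ext v
    simp only [Set.mem_setOf_eq, Set.mem_inter_iff, Pi.add_apply, Pi.smul_apply,
      smul_eq_mul]
    constructor
    · intro h
      have hx : x v = 0 := by
        by_contra hxv
        apply hr
        refine Finset.mem_image.mpr ⟨v, Finset.mem_univ v, ?_⟩
        field_simp
        linarith
      refine ⟨hx, ?_⟩
      rw [hx] at h
      simpa using h
    · rintro ⟨h1, h2⟩
      rw [h1, h2]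
      ring
end

section
/- Let G be a graph, X ⊆ V(G), and let X̄ be the skew zero forcing closure of X. Then there exists a matching M of G saturating every vertex of X̄ \ X. -/
lemma szf_subset {V : Type*} {G : SimpleGraph V} {S T : Set V}
    (h : Relation.ReflTransGen (SZFStep G) S T) : S ⊆ T := by
  induction h with
  | refl => exact le_refl _
  | tail _ hstep ih =>
    obtain ⟨v, w, _, _, _, rfl⟩ := hstep
    exact fun x hx => Set.mem_insert_of_mem _ (ih hx)

lemma key {V : Type*} [DecidableEq V] (G : SimpleGraph V)
    (T : Set V) : ∀ S : Set V, Relation.ReflTransGen (SZFStep G) S T →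
    ∃ M : Finset (Sym2 V), IsMatching G M ∧ (∀ v ∈ T \ S, ∃ e ∈ M, v ∈ e) ∧
      (∀ e ∈ M, ∃ x, x ∈ e ∧ x ∈ T \ S) := by
  intro S₀ h
  induction h using Relation.ReflTransGen.head_induction_on with
  | refl => exact ⟨∅, ⟨by simp, by simp⟩, by simp, by simp⟩
  | @head S S' hstep htail ih =>
    obtain ⟨v, w, hadj, hwS, huniq, rfl⟩ := hstep
    obtain ⟨M, ⟨hMe, hMd⟩, hMsat, hMuse⟩ := ih
    have hwT : w ∈ T := szf_subset htail (Set.mem_insert _ _)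
    have hvw : v ≠ w := G.ne_of_adj hadj
    by_cases h1 : ∃ e ∈ M, w ∈ e
    · refine ⟨M, ⟨hMe, hMd⟩, ?_, ?_⟩
      · intro u hu
        by_cases huw : u = w
        · obtain ⟨e, heM, hwe⟩ := h1
          exact ⟨e, heM, huw ▸ hwe⟩
        · exact hMsat u ⟨hu.1, fun hmem => by
            rcases hmem with rfl | hmem
            · exact huw rfl
            · exact hu.2 hmem⟩
      · intro e he
        obtain ⟨x, hxe, hxT, hxS⟩ := hMuse e he
        exact ⟨x, hxe, hxT, fun hx => hxS (Set.mem_insert_of_mem _ hx)⟩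
    · push_neg at h1
      by_cases h2 : ∃ e ∈ M, v ∈ e
      · obtain ⟨e, heM, hve⟩ := h2
        set a := Sym2.Mem.other hve with ha
        have hea : s(v, a) = e := Sym2.other_spec hve
        have haadj : G.Adj v a := by
          have := hMe heM
          rw [← hea] at this
          exact this
        have haw : a ≠ w := by
          intro h
          exact h1 e heM (by rw [← hea, h]; exact Sym2.mem_mk_right _ _)
        have haS : a ∈ S := by
          by_contra haS
          exact haw (huniq a haadj haS)
        refine ⟨insert s(v, w) (M.erase e), ⟨?_, ?_⟩, ?_, ?_⟩
        · intro f hf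
          simp only [Finset.coe_insert, Set.mem_insert_iff] at hf
          rcases hf with rfl | hf
          · exact hadj
          · exact hMe (Finset.mem_of_mem_erase hf)
        · intro e1 he1 e2 he2 hne u hue1
          rw [Finset.mem_insert] at he1 he2
          rcases he1 with rfl | he1
          · rcases he2 with rfl | he2
            · exact absurd rfl hne
            · have he2M := Finset.mem_of_mem_erase he2
              have he2ne := Finset.ne_of_mem_erase he2
              rcases Sym2.mem_iff.mp hue1 with rfl | rfl
              · exact hMd e heM e2 he2M (Ne.symm he2ne) _ (hea ▸ Sym2.mem_mk_left _ _)
              · exact h1 e2 he2M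
          · rcases he2 with rfl | he2
            · have he1M := Finset.mem_of_mem_erase he1
              have he1ne := Finset.ne_of_mem_erase he1
              intro hue2
              rcases Sym2.mem_iff.mp hue2 with rfl | rfl
              · exact hMd e1 he1M e heM he1ne u hue1 (hea ▸ Sym2.mem_mk_left _ _)
              · exact h1 e1 he1M hue1
            · exact hMd e1 (Finset.mem_of_mem_erase he1) e2 (Finset.mem_of_mem_erase he2) hne u hue1
        · intro u hu
          by_cases huw : u = w
          · exact ⟨s(v, w), Finset.mem_insert_self _ _, huw ▸ Sym2.mem_mk_right _ _⟩
          · have huS' : u ∈ T \ insert w S := ⟨hu.1, fun hmem => by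
              rcases hmem with rfl | hmem
              · exact huw rfl
              · exact hu.2 hmem⟩
            obtain ⟨e', he'M, hue'⟩ := hMsat u huS'
            by_cases hee : e' = e
            · subst hee
              have : u = v := by
                rw [← hea] at hue'
                rcases Sym2.mem_iff.mp hue' with rfl | rfl
                · rfl
                · exact absurd haS hu.2
              exact ⟨s(v, w), Finset.mem_insert_self _ _, this ▸ Sym2.mem_mk_left _ _⟩
            · exact ⟨e', Finset.mem_insert_of_mem (Finset.mem_erase.mpr ⟨hee, he'M⟩), hue'⟩
        · intro f hf
          rw [Finset.mem_insert] at hf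
          rcases hf with rfl | hf
          · exact ⟨w, Sym2.mem_mk_right _ _, hwT, hwS⟩
          · obtain ⟨x, hxf, hxT, hxS⟩ := hMuse f (Finset.mem_of_mem_erase hf)
            exact ⟨x, hxf, hxT, fun hx => hxS (Set.mem_insert_of_mem _ hx)⟩
      · push_neg at h2
        refine ⟨insert s(v, w) M, ⟨?_, ?_⟩, ?_, ?_⟩
        · intro f hf
          simp only [Finset.coe_insert, Set.mem_insert_iff] at hf
          rcases hf with rfl | hf
          · exact hadj
          · exact hMe hf
        · intro e1 he1 e2 he2 hne u hue1
          rw [Finset.mem_insert] at he1 he2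
          rcases he1 with rfl | he1
          · rcases he2 with rfl | he2
            · exact absurd rfl hne
            · rcases Sym2.mem_iff.mp hue1 with rfl | rfl
              · exact h2 e2 he2
              · exact h1 e2 he2
          · rcases he2 with rfl | he2
            · intro hue2
              rcases Sym2.mem_iff.mp hue2 with rfl | rfl
              · exact h2 e1 he1 hue1
              · exact h1 e1 he1 hue1
            · exact hMd e1 he1 e2 he2 hne u hue1
        · intro u hu
          by_cases huw : u = w
          · exact ⟨s(v, w), Finset.mem_insert_self _ _, huw ▸ Sym2.mem_mk_right _ _⟩
          · obtain ⟨e', he'M, hue'⟩ := hMsat u ⟨hu.1, fun hmem => by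
              rcases hmem with rfl | hmem
              · exact huw rfl
              · exact hu.2 hmem⟩
            exact ⟨e', Finset.mem_insert_of_mem he'M, hue'⟩
        · intro f hf
          rw [Finset.mem_insert] at hf
          rcases hf with rfl | hf
          · exact ⟨w, Sym2.mem_mk_right _ _, hwT, hwS⟩
          · obtain ⟨x, hxf, hxT, hxS⟩ := hMuse f hf
            exact ⟨x, hxf, hxT, fun hx => hxS (Set.mem_insert_of_mem _ hx)⟩

/-- There is a matching of G saturating every vertex of X̄ \ X, where X̄ is
the skew zero forcing closure of X. -/
theorem stmt10 {V : Type*} [Fintype V] [DecidableEq V] (G : SimpleGraph V)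
    (X Xbar : Set V) (hX : SZFDerived G X Xbar) :
    ∃ M : Finset (Sym2 V), IsMatching G M ∧ ∀ v ∈ Xbar \ X, ∃ e ∈ M, v ∈ e := by
  obtain ⟨M, hM, hsat, -⟩ := key G Xbar X hX.1
  exact ⟨M, hM, hsat⟩
end

section
/- The cycle C_n is SZF-complete if and only if 4 divides n. In particular, for 4 | n, the SZF-closed sets of C_n are exactly ∅, V(C_n), the set of even-indexed vertices, and the set of odd-indexed vertices, and each is the zero locus of a nullvector. -/
open Matrix

/-- A graph is SZF-complete if every skew zero forcing closed set of vertices is the zero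
locus of some vector in the kernel of its adjacency matrix. -/
def SZFComplete {V : Type*} [Fintype V] [DecidableEq V] (G : SimpleGraph V)
    [DecidableRel G.Adj] : Prop :=
  ∀ S : Set V, SZFStalled G S →
    ∃ x : V → ℝ, G.adjMatrix ℝ *ᵥ x = 0 ∧ {v : V | x v = 0} = S

section Aux

open scoped Fin.CommRing Fin.NatCast

variable {n : ℕ} [NeZero n]

lemma cyc_adj_iff (hn : 3 ≤ n) {v w : Fin n} :
    (SimpleGraph.cycleGraph n).Adj v w ↔ w = v + 1 ∨ w = v - 1 := by
  rw [SimpleGraph.cycleGraph_adj']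
  have h1 : ((1 : Fin n) : ℕ) = 1 := by rw [Fin.val_one']; exact Nat.mod_eq_of_lt (by omega)
  constructor
  · rintro (h | h)
    · right
      have hvw : v - w = 1 := Fin.ext (by rw [h, h1])
      linear_combination -hvw
    · left
      have hvw : w - v = 1 := Fin.ext (by rw [h, h1])
      linear_combination hvw
  · rintro (rfl | rfl)
    · right
      rw [show v + 1 - v = 1 from by ring, h1]
    · left
      rw [show v - (v - 1) = 1 from by ring, h1]

lemma cyc_two_ne (hn : 3 ≤ n) (v : Fin n) : v + 1 ≠ v - 1 := by
  intro h
  have h2 : ((2 : ℕ) : Fin n) = 0 := by push_cast; linear_combination h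
  rw [Fin.natCast_eq_zero] at h2
  exact absurd (Nat.le_of_dvd (by norm_num) h2) (by omega)

lemma cyc_stalled_iff (hn : 3 ≤ n) (S : Set (Fin n)) :
    SZFStalled (SimpleGraph.cycleGraph n) S ↔ ∀ i : Fin n, (i ∈ S ↔ i + 2 ∈ S) := by
  constructor
  · intro h i
    rw [← not_iff_not]
    constructor
    · intro hi
      have hadj : (SimpleGraph.cycleGraph n).Adj (i + 1) i := by
        rw [cyc_adj_iff hn]; right; ring
      obtain ⟨u, hu1, hu2, hu3⟩ := h (i + 1) i hadj hi
      rw [cyc_adj_iff hn] at hu1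
      rcases hu1 with rfl | rfl
      · rwa [show i + 1 + 1 = i + 2 from by ring] at hu2
      · exact absurd (show i + 1 - 1 = i from by ring) hu3
    · intro hi
      have hadj : (SimpleGraph.cycleGraph n).Adj (i + 1) (i + 2) := by
        rw [cyc_adj_iff hn]; left; ring
      obtain ⟨u, hu1, hu2, hu3⟩ := h (i + 1) (i + 2) hadj hi
      rw [cyc_adj_iff hn] at hu1
      rcases hu1 with rfl | rfl
      · exact absurd (show i + 1 + 1 = i + 2 from by ring) hu3
      · rwa [show i + 1 - 1 = i from by ring] at hu2
  · intro h v w hadj hw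
    rw [cyc_adj_iff hn] at hadj
    rcases hadj with rfl | rfl
    · refine ⟨v - 1, by rw [cyc_adj_iff hn]; right; rfl, fun hv => hw ?_, (cyc_two_ne hn v).symm⟩
      have h2 := (h (v - 1)).mp hv
      rwa [show v - 1 + 2 = v + 1 from by ring] at h2
    · refine ⟨v + 1, by rw [cyc_adj_iff hn]; left; rfl, fun hv => hw ?_, cyc_two_ne hn v⟩
      exact (h (v - 1)).mpr (by rwa [show v - 1 + 2 = v + 1 from by ring])


lemma cyc_val_one (hn : 3 ≤ n) : ((1 : Fin n) : ℕ) = 1 := by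
  rw [Fin.val_one']; exact Nat.mod_eq_of_lt (by omega)

lemma cyc_val_two (hn : 3 ≤ n) : ((2 : Fin n) : ℕ) = 2 := by
  have h : (2 : Fin n) = ((2 : ℕ) : Fin n) := by push_cast; rfl
  rw [h, Fin.val_cast_of_lt (by omega)]

lemma cyc_mem_parity (hn : 3 ≤ n) (S : Set (Fin n))
    (h : ∀ i : Fin n, (i ∈ S ↔ i + 2 ∈ S)) (i : Fin n) :
    i ∈ S ↔ (⟨i.val % 2, by omega⟩ : Fin n) ∈ S := by
  have key : ∀ k : ℕ, ∀ hk : k < n,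
      ((⟨k, hk⟩ : Fin n) ∈ S ↔ (⟨k % 2, by omega⟩ : Fin n) ∈ S) := by
    intro k
    induction k using Nat.strong_induction_on with
    | _ k ih =>
      intro hk
      rcases Nat.lt_or_ge k 2 with hk2 | hk2
      · simp only [Nat.mod_eq_of_lt hk2]
      · have hj : k - 2 < n := by omega
        have hkey : (⟨k - 2, hj⟩ : Fin n) + 2 = ⟨k, hk⟩ := by
          apply Fin.ext
          rw [Fin.add_def]
          simp only [cyc_val_two hn]
          rw [show k - 2 + 2 = k from by omega, Nat.mod_eq_of_lt hk]
        rw [← hkey, ← h ⟨k - 2, hj⟩, ih (k - 2) (by omega) hj]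
        simp only [show (k - 2) % 2 = k % 2 from by omega]
  have h2 := key i.val i.isLt
  rwa [Fin.eta] at h2

lemma cyc_classify (hn : 3 ≤ n) (S : Set (Fin n))
    (h : ∀ i : Fin n, (i ∈ S ↔ i + 2 ∈ S)) :
    S = ∅ ∨ S = Set.univ ∨ S = {i : Fin n | i.val % 2 = 0} ∨
      S = {i : Fin n | i.val % 2 = 1} := by
  have hmp := cyc_mem_parity hn S h
  by_cases h0 : (⟨0, by omega⟩ : Fin n) ∈ S <;> by_cases h1 : (⟨1, by omega⟩ : Fin n) ∈ S
  · right; left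
    ext i
    simp only [Set.mem_univ, iff_true]
    rw [hmp i]
    rcases (show i.val % 2 = 0 ∨ i.val % 2 = 1 from by omega) with hc | hc <;>
      simp only [hc]
    exacts [h0, h1]
  · right; right; left
    ext i
    rw [hmp i]
    simp only [Set.mem_setOf_eq]
    rcases (show i.val % 2 = 0 ∨ i.val % 2 = 1 from by omega) with hc | hc <;>
      simp only [hc]
    · exact iff_of_true h0 trivial
    · exact iff_of_false h1 (by omega)
  · right; right; right
    ext i
    rw [hmp i]
    simp only [Set.mem_setOf_eq]
    rcases (show i.val % 2 = 0 ∨ i.val % 2 = 1 from by omega) with hc | hc <;>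
      simp only [hc]
    · exact iff_of_false h0 (by omega)
    · exact iff_of_true h1 trivial
  · left
    ext i
    simp only [Set.mem_empty_iff_false, iff_false]
    rw [hmp i]
    rcases (show i.val % 2 = 0 ∨ i.val % 2 = 1 from by omega) with hc | hc <;>
      simp only [hc]
    exacts [h0, h1]

lemma cyc_foursets_shift (hn : 3 ≤ n) (h2 : 2 ∣ n) (S : Set (Fin n))
    (hS : S = ∅ ∨ S = Set.univ ∨ S = {i : Fin n | i.val % 2 = 0} ∨
      S = {i : Fin n | i.val % 2 = 1}) :
    ∀ i : Fin n, (i ∈ S ↔ i + 2 ∈ S) := by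
  have hval : ∀ i : Fin n, (i + 2).val % 2 = i.val % 2 := by
    intro i
    rw [Fin.add_def]
    simp only [cyc_val_two hn]
    rw [Nat.mod_mod_of_dvd _ h2]
    omega
  rcases hS with rfl | rfl | rfl | rfl <;> intro i <;>
    simp [Set.mem_setOf_eq, hval i]

lemma cyc_mulVec (hn : 3 ≤ n) (x : Fin n → ℝ) (v : Fin n) :
    ((SimpleGraph.cycleGraph n).adjMatrix ℝ *ᵥ x) v = x (v - 1) + x (v + 1) := by
  rw [SimpleGraph.adjMatrix_mulVec_apply]
  have hns : (SimpleGraph.cycleGraph n).neighborFinset v = {v - 1, v + 1} := by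
    ext u
    rw [SimpleGraph.mem_neighborFinset, cyc_adj_iff hn, Finset.mem_insert,
      Finset.mem_singleton]
    tauto
  rw [hns, Finset.sum_pair (Ne.symm (cyc_two_ne hn v))]

def cycPat (a b : ℝ) (k : ℕ) : ℝ :=
  if k % 4 = 0 then a else if k % 4 = 1 then b else if k % 4 = 2 then -a else -b

lemma cycPat_mod (a b : ℝ) {j k : ℕ} (h : j % 4 = k % 4) : cycPat a b j = cycPat a b k := by
  simp only [cycPat, h]

lemma cyc_nullvec (hn : 3 ≤ n) (h4 : 4 ∣ n) (a b : ℝ) :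
    (SimpleGraph.cycleGraph n).adjMatrix ℝ *ᵥ (fun i : Fin n => cycPat a b i.val) = 0 := by
  funext v
  rw [Pi.zero_apply, cyc_mulVec hn]
  have e1 : (v + 1).val % 4 = (v.val + 1) % 4 := by
    rw [Fin.add_def]
    simp only [cyc_val_one hn]
    rw [Nat.mod_mod_of_dvd _ h4]
  have e2 : (v - 1).val % 4 = (v.val + 3) % 4 := by
    rw [Fin.sub_def]
    simp only [cyc_val_one hn]
    rw [Nat.mod_mod_of_dvd _ h4]
    omega
  rw [cycPat_mod a b e2, cycPat_mod a b e1]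
  rcases (show v.val % 4 = 0 ∨ v.val % 4 = 1 ∨ v.val % 4 = 2 ∨ v.val % 4 = 3 from by omega)
    with h' | h' | h' | h'
  · rw [cycPat_mod a b (show (v.val + 3) % 4 = 3 % 4 from by omega),
      cycPat_mod a b (show (v.val + 1) % 4 = 1 % 4 from by omega)]
    simp [cycPat]
  · rw [cycPat_mod a b (show (v.val + 3) % 4 = 0 % 4 from by omega),
      cycPat_mod a b (show (v.val + 1) % 4 = 2 % 4 from by omega)]
    simp [cycPat]
  · rw [cycPat_mod a b (show (v.val + 3) % 4 = 1 % 4 from by omega),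
      cycPat_mod a b (show (v.val + 1) % 4 = 3 % 4 from by omega)]
    simp [cycPat]
  · rw [cycPat_mod a b (show (v.val + 3) % 4 = 2 % 4 from by omega),
      cycPat_mod a b (show (v.val + 1) % 4 = 0 % 4 from by omega)]
    simp [cycPat]

lemma cyc_nullvec_exists (hn : 3 ≤ n) (h4 : 4 ∣ n) (S : Set (Fin n))
    (hS : SZFStalled (SimpleGraph.cycleGraph n) S) :
    ∃ x : Fin n → ℝ, (SimpleGraph.cycleGraph n).adjMatrix ℝ *ᵥ x = 0 ∧
      {v : Fin n | x v = 0} = S := by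
  rcases cyc_classify hn S ((cyc_stalled_iff hn S).mp hS) with rfl | rfl | rfl | rfl
  · refine ⟨fun i => cycPat 1 1 i.val, cyc_nullvec hn h4 1 1, ?_⟩
    ext v
    simp only [Set.mem_setOf_eq, Set.mem_empty_iff_false, iff_false, cycPat]
    split_ifs <;> norm_num
  · exact ⟨0, Matrix.mulVec_zero _, by ext v; simp⟩
  · refine ⟨fun i => cycPat 0 1 i.val, cyc_nullvec hn h4 0 1, ?_⟩
    ext v
    simp only [Set.mem_setOf_eq, cycPat]
    split_ifs with hc1 hc2 hc3 <;> norm_num <;> omega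
  · refine ⟨fun i => cycPat 1 0 i.val, cyc_nullvec hn h4 1 0, ?_⟩
    ext v
    simp only [Set.mem_setOf_eq, cycPat]
    split_ifs with hc1 hc2 hc3 <;> norm_num <;> omega

lemma cyc_not_complete (hn : 3 ≤ n) (h4 : ¬ 4 ∣ n) :
    ¬ SZFComplete (SimpleGraph.cycleGraph n) := by
  intro hc
  obtain ⟨x, hx, hz⟩ := hc ∅ ((cyc_stalled_iff hn ∅).mpr (by simp))
  have step : ∀ i : Fin n, x (i + 2) = - x i := by
    intro i
    have h := congrFun hx (i + 1)
    rw [cyc_mulVec hn, Pi.zero_apply,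
      show i + 1 - 1 = i from by ring, show i + 1 + 1 = i + 2 from by ring] at h
    linarith
  have key : ∀ k : ℕ, x ((2 * k : ℕ) : Fin n) = (-1 : ℝ) ^ k * x 0 := by
    intro k
    induction k with
    | zero => simp
    | succ k ih =>
      have hcast : ((2 * (k + 1) : ℕ) : Fin n) = ((2 * k : ℕ) : Fin n) + 2 := by
        push_cast; ring
      rw [hcast, step, ih]; ring
  obtain ⟨k, hk, hdvd⟩ : ∃ k : ℕ, k % 2 = 1 ∧ n ∣ 2 * k := by
    rcases Nat.even_or_odd n with ⟨m, hm⟩ | ho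
    · exact ⟨m, by omega, ⟨1, by omega⟩⟩
    · exact ⟨n, by rcases ho with ⟨m, hm⟩; omega, ⟨2, by ring⟩⟩
  have h0 : x 0 = 0 := by
    have hkk := key k
    rw [show ((2 * k : ℕ) : Fin n) = 0 from Fin.natCast_eq_zero.mpr hdvd,
      Odd.neg_one_pow (Nat.odd_iff.mpr hk)] at hkk
    linarith
  have hmem : (0 : Fin n) ∈ {v : Fin n | x v = 0} := h0
  rw [hz] at hmem
  exact hmem

end Aux

/-- The cycle C_n (n ≥ 3) is SZF-complete iff 4 ∣ n; moreover, when 4 ∣ n,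
the SZF-closed sets of C_n are exactly ∅, the full vertex set, the even-indexed vertices,
and the odd-indexed vertices, and each such set is the zero locus of a nullvector. -/
theorem stmt12 (n : ℕ) (hn : 3 ≤ n) :
    (SZFComplete (SimpleGraph.cycleGraph n) ↔ 4 ∣ n) ∧
    (4 ∣ n →
      (∀ S : Set (Fin n), SZFStalled (SimpleGraph.cycleGraph n) S ↔
        (S = ∅ ∨ S = Set.univ ∨ S = {i : Fin n | i.val % 2 = 0} ∨
          S = {i : Fin n | i.val % 2 = 1})) ∧
      (∀ S : Set (Fin n), SZFStalled (SimpleGraph.cycleGraph n) S →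
        ∃ x : Fin n → ℝ, (SimpleGraph.cycleGraph n).adjMatrix ℝ *ᵥ x = 0 ∧
          {v : Fin n | x v = 0} = S)) := by
  haveI : NeZero n := ⟨by omega⟩
  have h24 : (4 : ℕ) ∣ n → (2 : ℕ) ∣ n := fun h => dvd_trans (by norm_num) h
  have hclass : 4 ∣ n → ∀ S : Set (Fin n), SZFStalled (SimpleGraph.cycleGraph n) S ↔
      (S = ∅ ∨ S = Set.univ ∨ S = {i : Fin n | i.val % 2 = 0} ∨
        S = {i : Fin n | i.val % 2 = 1}) := by
    intro h4 S
    rw [cyc_stalled_iff hn]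
    exact ⟨cyc_classify hn S, cyc_foursets_shift hn (h24 h4) S⟩
  refine ⟨⟨fun hc => ?_, fun h4 S hS => cyc_nullvec_exists hn h4 S hS⟩,
    fun h4 => ⟨hclass h4, fun S hS => cyc_nullvec_exists hn h4 S hS⟩⟩
  by_contra h4
  exact cyc_not_complete hn h4 hc
end

section
/- The complete bipartite graph K_{m,n} is SZF-complete: every subset X of its vertices such that no vertex has exactly one neighbor outside X is the zero locus of some adjacency nullvector. -/
open Matrix
open scoped Classical

lemma aux_vec {α : Type*} [Fintype α] [DecidableEq α] (T : Finset α) :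
    ∃ g : α → ℝ, (∀ a, g a = 0 ↔ a ∉ T) ∧ (T.card ≠ 1 → ∑ a, g a = 0) := by
  rcases Nat.lt_or_ge T.card 2 with h | h
  · by_cases h0 : T = ∅
    · exact ⟨0, by simp [h0], by simp⟩
    · have hc : T.card = 1 := by
        have := Finset.card_pos.mpr (Finset.nonempty_of_ne_empty h0); omega
      refine ⟨fun a => if a ∈ T then 1 else 0, ?_, ?_⟩
      · intro a; by_cases ha : a ∈ T <;> simp [ha]
      · intro hne; exact absurd hc hne
  · have hTne : T.Nonempty := Finset.card_pos.mp (by omega)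
    obtain ⟨t0, ht0⟩ := hTne
    have hc : ((T.card : ℝ) - 1) ≠ 0 := by
      have : (2:ℝ) ≤ T.card := by exact_mod_cast h
      linarith
    refine ⟨fun a => if a = t0 then -((T.card : ℝ) - 1) else if a ∈ T then 1 else 0, ?_, ?_⟩
    · intro a
      by_cases ha : a = t0
      · subst ha
        have hc' : ¬(1 - (T.card:ℝ) = 0) := fun h' => hc (by linarith)
        simp [ht0, hc']
      · by_cases hmem : a ∈ T <;> simp [ha, hmem]
    · intro _
      have hzero : ∀ a ∈ Finset.univ, a ∉ T →
          (if a = t0 then -((T.card : ℝ) - 1) else if a ∈ T then 1 else 0) = 0 := by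
        intro a _ haT
        have : a ≠ t0 := fun h => haT (h ▸ ht0)
        simp [this, haT]
      rw [← Finset.sum_subset T.subset_univ hzero]
      rw [← Finset.add_sum_erase _ _ ht0]
      have : ∀ a ∈ T.erase t0,
          (if a = t0 then -((T.card : ℝ) - 1) else if a ∈ T then 1 else 0) = 1 := by
        intro a ha
        have h1 := Finset.ne_of_mem_erase ha
        have h2 := Finset.mem_of_mem_erase ha
        simp [h1, h2]
      rw [Finset.sum_congr rfl this]
      simp [Finset.card_erase_of_mem ht0]
      have hcard : 1 ≤ T.card := by omega
      push_cast [hcard]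
      ring

/-- The complete bipartite graph K_{m,n} is SZF-complete: every skew zero
forcing closed vertex set is the zero locus of an adjacency nullvector. -/
theorem stmt13 (m n : ℕ) (X : Set (Fin m ⊕ Fin n))
    (hX : SZFStalled (completeBipartiteGraph (Fin m) (Fin n)) X) :
    ∃ x : Fin m ⊕ Fin n → ℝ,
      (completeBipartiteGraph (Fin m) (Fin n)).adjMatrix ℝ *ᵥ x = 0 ∧
      {v : Fin m ⊕ Fin n | x v = 0} = X := by
  set TM : Finset (Fin m) := Finset.univ.filter (fun i => Sum.inl i ∉ X) with hTM
  set TN : Finset (Fin n) := Finset.univ.filter (fun j => Sum.inr j ∉ X) with hTN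
  obtain ⟨gM, hgM, hsM⟩ := aux_vec TM
  obtain ⟨gN, hgN, hsN⟩ := aux_vec TN
  have hMcard : n ≠ 0 → TM.card ≠ 1 := by
    intro hn h1
    obtain ⟨w, hw⟩ := Finset.card_eq_one.mp h1
    have hwX : Sum.inl w ∉ X := by
      have : w ∈ TM := hw ▸ Finset.mem_singleton_self w
      simpa [hTM] using this
    obtain ⟨u, hadj, huX, hne⟩ := hX (Sum.inr ⟨0, Nat.pos_of_ne_zero hn⟩) (Sum.inl w) (by simp) hwX
    cases u with
    | inl i =>
        have : i ∈ TM := by simpa [hTM] using huX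
        rw [hw, Finset.mem_singleton] at this
        exact hne (by rw [this])
    | inr j => simp at hadj
  have hNcard : m ≠ 0 → TN.card ≠ 1 := by
    intro hm h1
    obtain ⟨w, hw⟩ := Finset.card_eq_one.mp h1
    have hwX : Sum.inr w ∉ X := by
      have : w ∈ TN := hw ▸ Finset.mem_singleton_self w
      simpa [hTN] using this
    obtain ⟨u, hadj, huX, hne⟩ := hX (Sum.inl ⟨0, Nat.pos_of_ne_zero hm⟩) (Sum.inr w) (by simp) hwX
    cases u with
    | inr j =>
        have : j ∈ TN := by simpa [hTN] using huX
        rw [hw, Finset.mem_singleton] at this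
        exact hne (by rw [this])
    | inl i => simp at hadj
  refine ⟨Sum.elim gM gN, ?_, ?_⟩
  · funext v
    cases v with
    | inl i =>
        have hm : m ≠ 0 := fun h => (h ▸ i).elim0
        simp [mulVec, dotProduct, SimpleGraph.adjMatrix_apply, Fintype.sum_sum_type]
        exact hsN (hNcard hm)
    | inr j =>
        have hn : n ≠ 0 := fun h => (h ▸ j).elim0
        simp [mulVec, dotProduct, SimpleGraph.adjMatrix_apply, Fintype.sum_sum_type]
        exact hsM (hMcard hn)
  · ext v
    cases v with
    | inl i =>
        simp only [Set.mem_setOf_eq, Sum.elim_inl, hgM i]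
        simp [hTM]
    | inr j =>
        simp only [Set.mem_setOf_eq, Sum.elim_inr, hgN j]
        simp [hTN]
end

section
/- Let G be a bipartite graph with a pendant vertex v whose neighbor is w. Then |det(A(G))| = |det(A(G − {v,w}))| , hence if G is nonsingular so is G − {v,w}. -/
open Matrix
open scoped Classical

/-- If `v` is a pendant vertex of a bipartite graph `G` with neighbor `w`,
then |det A(G)| = |det A(G - {v, w})|; hence if G is nonsingular, so is G - {v, w}. -/
theorem stmt15 {V : Type*} [Fintype V] [DecidableEq V] (G : SimpleGraph V)
    [DecidableRel G.Adj] (hbip : G.Colorable 2) (v w : V)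
    (hdeg : G.degree v = 1) (hadj : G.Adj v w) :
    |(G.adjMatrix ℝ).det| = |((G.induce {u : V | u ≠ v ∧ u ≠ w}).adjMatrix ℝ).det| ∧
    ((G.adjMatrix ℝ).det ≠ 0 →
      ((G.induce {u : V | u ≠ v ∧ u ≠ w}).adjMatrix ℝ).det ≠ 0) := by
  have hvw : v ≠ w := G.ne_of_adj hadj
  set S : Set V := {u : V | u ≠ v ∧ u ≠ w} with hS
  set A : Matrix V V ℝ := G.adjMatrix ℝ with hA
  -- v is adjacent only to w
  have hnbr : ∀ u : V, G.Adj v u → u = w := by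
    intro u hu
    obtain ⟨a, ha⟩ := Finset.card_eq_one.mp hdeg
    have h1 : u ∈ G.neighborFinset v := by rwa [SimpleGraph.mem_neighborFinset]
    have h2 : w ∈ G.neighborFinset v := by rwa [SimpleGraph.mem_neighborFinset]
    rw [ha, Finset.mem_singleton] at h1 h2
    rw [h1, h2]
  have hAv : ∀ u : ↥S, A v ↑u = 0 := by
    intro u
    rw [hA, SimpleGraph.adjMatrix_apply, if_neg]
    intro h
    exact u.2.2 (hnbr _ h)
  have hAv' : ∀ u : ↥S, A ↑u v = 0 := by
    intro u
    rw [hA, SimpleGraph.adjMatrix_apply, if_neg]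
    intro h
    exact u.2.2 (hnbr _ h.symm)
  -- the equivalence
  let f : Fin 2 ⊕ ↥S → V := Sum.elim ![v, w] Subtype.val
  have hfbij : Function.Bijective f := by
    constructor
    · rintro (i | a) (j | b) h
      · fin_cases i <;> fin_cases j <;> simp_all [f] <;> exact absurd h hvw.symm
      · exfalso; fin_cases i <;> simp [f] at h
        · exact b.2.1 h.symm
        · exact b.2.2 h.symm
      · exfalso; fin_cases j <;> simp [f] at h
        · exact a.2.1 h
        · exact a.2.2 h
      · simpa [f, Subtype.ext_iff] using h
    · intro u
      by_cases h1 : u = v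
      · exact ⟨Sum.inl 0, by simp [f, h1]⟩
      by_cases h2 : u = w
      · exact ⟨Sum.inl 1, by simp [f, h2]⟩
      · exact ⟨Sum.inr ⟨u, h1, h2⟩, rfl⟩
  let e : Fin 2 ⊕ ↥S ≃ V := Equiv.ofBijective f hfbij
  set P : Matrix (Fin 2) (Fin 2) ℝ := !![0, 1; 1, 0] with hPdef
  set Q : Matrix (Fin 2) ↥S ℝ := Matrix.of fun i u => A (f (Sum.inl i)) ↑u with hQdef
  set R : Matrix ↥S (Fin 2) ℝ := Matrix.of fun u i => A ↑u (f (Sum.inl i)) with hRdef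
  set D : Matrix ↥S ↥S ℝ := A.submatrix (fun u : ↥S => (u : V)) (fun u : ↥S => (u : V))
    with hDdef
  have hPP : P * P = 1 := by
    ext i j
    fin_cases i <;> fin_cases j <;>
      simp [hPdef, Matrix.mul_apply, Fin.sum_univ_two, Matrix.one_apply]
  haveI : Invertible P := ⟨P, hPP, hPP⟩
  have hinv : ⅟P = P := invOf_eq_right_inv hPP
  have hblock : A.submatrix e e = Matrix.fromBlocks P Q R D := by
    ext (i | a) (j | b)
    · show A (f (Sum.inl i)) (f (Sum.inl j)) = P i j
      fin_cases i <;> fin_cases j <;>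
        simp [f, hA, hPdef, hadj, hadj.symm]
    · rfl
    · rfl
    · rfl
  have hzero : R * ⅟P * Q = 0 := by
    rw [hinv]
    ext u u'
    have h1 : A ↑u v = 0 := hAv' u
    have h2 : A v ↑u' = 0 := hAv u'
    simp [Matrix.mul_apply, Fin.sum_univ_two, hQdef, hRdef, hPdef, f, h1, h2]
  have hdet : A.det = -D.det := by
    calc A.det = (A.submatrix e e).det := (Matrix.det_submatrix_equiv_self e A).symm
      _ = (Matrix.fromBlocks P Q R D).det := by rw [hblock]
      _ = P.det * (D - R * ⅟P * Q).det := Matrix.det_fromBlocks₁₁ P Q R D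
      _ = -D.det := by
          rw [hzero, sub_zero, hPdef]
          norm_num [Matrix.det_fin_two_of]
  have hDm : ((G.induce {u : V | u ≠ v ∧ u ≠ w}).adjMatrix ℝ) = D := by
    ext u u'
    simp [hDdef, hA, SimpleGraph.adjMatrix_apply, SimpleGraph.comap_adj]
  have hD : ((G.induce {u : V | u ≠ v ∧ u ≠ w}).adjMatrix ℝ).det = D.det := by rw [hDm]
  constructor
  · rw [hD, hdet, abs_neg]
  · intro h hc
    rw [hD] at hc
    exact h (by rw [hdet, hc, neg_zero])
end

section
/- Let T be a linear hypertree on n vertices in which every edge has at least two vertices, and let x be a nullvector of T. Then the zero locus of x is a vertex cover of T: every edge contains a vertex v with x_v = 0. -/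
open Finset

/-- The hypergraph (with edge set `E`) is linear: two distinct edges share at most one
vertex. -/
def HyperLinear {V : Type*} [DecidableEq V] (E : Finset (Finset V)) : Prop :=
  ∀ e ∈ E, ∀ f ∈ E, e ≠ f → (e ∩ f).card ≤ 1

/-- The hypergraph is connected. -/
def HyperConnected {V : Type*} (E : Finset (Finset V)) : Prop :=
  ∀ u v : V, Relation.ReflTransGen (fun a b => ∃ e ∈ E, a ∈ e ∧ b ∈ e) u v

/-- The hypergraph has a cycle: an alternating sequence of vertices and edges
`x₀, e₁, x₁, …, e_t, x_t` with `t ≥ 2`, distinct edges, vertices distinct except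
`x₀ = x_t`, and `x_{i-1}, x_i ∈ e_i`. -/
def HasHyperCycle {V : Type*} (E : Finset (Finset V)) : Prop :=
  ∃ (t : ℕ) (x : Fin (t + 1) → V) (e : Fin t → Finset V),
    2 ≤ t ∧ Function.Injective e ∧
    (∀ i j : Fin t, x i.castSucc = x j.castSucc → i = j) ∧
    x 0 = x (Fin.last t) ∧ (∀ i : Fin t, e i ∈ E) ∧
    ∀ i : Fin t, x i.castSucc ∈ e i ∧ x i.succ ∈ e i

/-- The Lagrangian polynomial of the link of `v`, evaluated at `x`:
`f_{H,v}(x) = Σ_{e ∋ v} Π_{w ∈ e \ {v}} x_w`. -/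
noncomputable def linkPoly {V : Type*} [DecidableEq V] (E : Finset (Finset V)) (x : V → ℂ) (v : V) : ℂ :=
  ∑ e ∈ E.filter (fun e => v ∈ e), ∏ w ∈ e.erase v, x w

lemma no_closed_walk {V : Type*} (E : Finset (Finset V))
    (hacyclic : ¬ HasHyperCycle E) :
    ∀ t : ℕ, 2 ≤ t → ∀ (v : ℕ → V) (e : ℕ → Finset V),
      (∀ i, i < t → e i ∈ E) →
      (∀ i, i < t → v i ∈ e i ∧ v (i+1) ∈ e i) →
      (∀ i, i + 1 < t → e i ≠ e (i+1)) →
      (∀ i, i < t → v i ≠ v (i+1)) →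
      v t = v 0 → False := by
  intro t
  induction t using Nat.strong_induction_on with
  | _ t IH =>
    intro ht v e hE hmem hee hvv hclose
    by_cases hvrep : ∃ a b, a < b ∧ b < t ∧ v a = v b
    · obtain ⟨a, b, hab, hbt, hvab⟩ := hvrep
      have h2 : 2 ≤ b - a := by
        rcases Nat.lt_or_ge (b - a) 2 with h | h
        · exfalso
          have hb : b = a + 1 := by omega
          exact hvv a (by omega) (hb ▸ hvab)
        · exact h
      refine IH (b - a) (by omega) (by omega) (fun k => v (a + k)) (fun k => e (a + k))
        (fun i hi => hE _ (by omega)) (fun i hi => hmem _ (by omega))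
        (fun i hi => hee _ (by omega)) (fun i hi => hvv _ (by omega)) ?_
      show v (a + (b - a)) = v (a + 0)
      have h3 : a + (b - a) = b := by omega
      have h4 : a + 0 = a := rfl
      rw [h3, h4, hvab]
    · by_cases herep : ∃ a b, a < b ∧ b < t ∧ e a = e b
      · obtain ⟨a, b, hab, hbt, heab⟩ := herep
        have h2 : 2 ≤ b - a := by
          rcases Nat.lt_or_ge (b - a) 2 with h | h
          · exfalso
            have hb : b = a + 1 := by omega
            exact hee a (by omega) (hb ▸ heab)
          · exact h
        set t' := b - a with ht'
        refine IH t' (by omega) (by omega)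
          (fun k => if k = t' then v (a + 1) else v (a + 1 + k))
          (fun k => e (a + 1 + k)) ?_ ?_ ?_ ?_ ?_
        · intro i hi; exact hE _ (by omega)
        · intro i hi
          by_cases hit : i + 1 = t'
          · have hb1 : a + 1 + i = b := by omega
            constructor
            · simp only [if_neg (by omega : ¬ i = t')]
              rw [hb1]
              exact (hmem b (by omega)).1
            · simp only [if_pos hit]
              rw [hb1, ← heab]
              exact (hmem a (by omega)).2
          · constructor
            · simp only [if_neg (by omega : ¬ i = t')]
              exact (hmem _ (by omega)).1
            · simp only [if_neg hit]
              exact (hmem _ (by omega)).2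
        · intro i hi; exact hee _ (by omega)
        · intro i hi
          by_cases hit : i + 1 = t'
          · simp only [if_neg (by omega : ¬ i = t'), if_pos hit]
            have hb1 : a + 1 + i = b := by omega
            rw [hb1]
            intro hcon
            exact hvrep ⟨a + 1, b, by omega, by omega, hcon.symm⟩
          · simp only [if_neg (by omega : ¬ i = t'), if_neg hit]
            exact hvv _ (by omega)
        · have h0 : (0:ℕ) ≠ t' := by omega
          show (if t' = t' then v (a+1) else v (a+1+t')) = (if 0 = t' then v (a+1) else v (a+1+0))
          simp [h0]
      · push_neg at hvrep herep
        refine hacyclic ⟨t, fun i => v i.val, fun i => e i.val, ht, ?_, ?_, ?_,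
          fun i => hE i.val i.2, fun i => hmem i.val i.2⟩
        · intro i j hij
          rcases lt_trichotomy i.val j.val with h | h | h
          · exact absurd hij (herep _ _ h j.2)
          · exact Fin.ext h
          · exact absurd hij.symm (herep _ _ h i.2)
        · intro i j hij
          simp only [Fin.coe_castSucc] at hij
          rcases lt_trichotomy i.val j.val with h | h | h
          · exact absurd hij (fun hc => (hvrep _ _ h j.2) hc)
          · exact Fin.ext h
          · exact absurd hij.symm (fun hc => (hvrep _ _ h i.2) hc)
        · show v 0 = v t
          exact hclose.symm


lemma step_lemma {V : Type*} [DecidableEq V] (E : Finset (Finset V)) (x : V → ℂ)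
    (hx : ∀ v, linkPoly E x v = 0) (f : Finset V) (hf : f ∈ E) (u : V) (hu : u ∈ f)
    (hnz : ∀ w ∈ f, x w ≠ 0) :
    ∃ g ∈ E, g ≠ f ∧ u ∈ g ∧ ∀ w ∈ g, x w ≠ 0 := by
  have hfu : f ∈ E.filter (fun e => u ∈ e) := mem_filter.2 ⟨hf, hu⟩
  have hsum := hx u
  unfold linkPoly at hsum
  have hterm : (∏ w ∈ f.erase u, x w) ≠ 0 :=
    Finset.prod_ne_zero_iff.2 (fun w hw => hnz w (Finset.mem_of_mem_erase hw))
  have htot := Finset.add_sum_erase (E.filter (fun e => u ∈ e))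
    (fun e => ∏ w ∈ e.erase u, x w) hfu
  have h2 : ∑ e ∈ (E.filter (fun e => u ∈ e)).erase f, ∏ w ∈ e.erase u, x w
      = - ∏ w ∈ f.erase u, x w :=
    eq_neg_of_add_eq_zero_right (htot.trans hsum)
  have hex : ∃ g ∈ (E.filter (fun e => u ∈ e)).erase f, (∏ w ∈ g.erase u, x w) ≠ 0 := by
    by_contra h
    push_neg at h
    rw [Finset.sum_eq_zero h] at h2
    exact hterm (neg_eq_zero.1 h2.symm)
  obtain ⟨g, hg, hgnz⟩ := hex
  obtain ⟨hgf, hg2⟩ := Finset.mem_erase.1 hg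
  obtain ⟨hgE, hug⟩ := Finset.mem_filter.1 hg2
  refine ⟨g, hgE, hgf, hug, fun w hw => ?_⟩
  by_cases hwu : w = u
  · subst hwu; exact hnz w hu
  · exact Finset.prod_ne_zero_iff.1 hgnz w (Finset.mem_erase.2 ⟨hwu, hw⟩)

theorem stmt16_aux {V : Type*} [Fintype V] [DecidableEq V] (E : Finset (Finset V))
    (hrank : ∀ e ∈ E, 2 ≤ e.card)
    (hacyclic : ¬ HasHyperCycle E)
    (x : V → ℂ) (hx : ∀ v : V, linkPoly E x v = 0) :
    ∀ e ∈ E, ∃ v ∈ e, x v = 0 := by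
  intro e0 he0
  by_contra hcon
  push_neg at hcon
  set P : Finset V × V → Prop := fun p => p.1 ∈ E ∧ p.2 ∈ p.1 ∧ ∀ w ∈ p.1, x w ≠ 0 with hPdef
  have hstep : ∀ p : {p : Finset V × V // P p}, ∃ q : {p : Finset V × V // P p},
      (q : Finset V × V).1 ≠ (p : Finset V × V).1 ∧
      (q : Finset V × V).2 ∈ (p : Finset V × V).1 ∧
      (q : Finset V × V).2 ≠ (p : Finset V × V).2 := by
    rintro ⟨⟨f, u⟩, hfE, huf, hnz⟩
    have hne : (f.erase u).Nonempty := by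
      have hc := hrank f hfE
      rw [← Finset.card_pos, Finset.card_erase_of_mem huf]
      show 0 < #f - 1
      omega
    obtain ⟨u', hu'⟩ := hne
    have hu'f : u' ∈ f := Finset.mem_of_mem_erase hu'
    have hu'ne : u' ≠ u := Finset.ne_of_mem_erase hu'
    obtain ⟨g, hgE, hgf, hug, hgnz⟩ := step_lemma E x hx f hfE u' hu'f hnz
    exact ⟨⟨(g, u'), hgE, hug, hgnz⟩, hgf, hu'f, hu'ne⟩
  choose F h1 h2 h3 using hstep
  have he0ne : e0.Nonempty := Finset.card_pos.1 (by have := hrank e0 he0; omega)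
  obtain ⟨v0, hv0⟩ := he0ne
  have hP0 : P (e0, v0) := ⟨he0, hv0, hcon⟩
  set s : ℕ → {p : Finset V × V // P p} := fun n => F^[n] ⟨(e0, v0), hP0⟩ with hsdef
  have hs : ∀ n, s (n+1) = F (s n) := fun n => Function.iterate_succ_apply' F n _
  set vv : ℕ → V := fun n => (s n).1.2 with hvvdef
  set ee : ℕ → Finset V := fun n => (s n).1.1 with heedef
  have hEn : ∀ n, ee n ∈ E := fun n => (s n).2.1
  have hmemn : ∀ n, vv n ∈ ee n := fun n => (s n).2.2.1
  have heen : ∀ n, ee n ≠ ee (n+1) := fun n => by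
    have h := h1 (s n); rw [← hs n] at h; exact fun hc => h hc.symm
  have hvin : ∀ n, vv (n+1) ∈ ee n := fun n => by
    have h := h2 (s n); rw [← hs n] at h; exact h
  have hvvn : ∀ n, vv n ≠ vv (n+1) := fun n => by
    have h := h3 (s n); rw [← hs n] at h; exact fun hc => h hc.symm
  obtain ⟨i, j, hij, hvij⟩ := Finite.exists_ne_map_eq_of_infinite vv
  have main : ∀ i j : ℕ, i < j → vv i = vv j → False := by
    intro i j hij hvij
    have hj1 : j ≠ i + 1 := by
      intro h; exact hvvn i (by rw [← h, ← hvij])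
    have h2t : 2 ≤ j - i := by omega
    refine no_closed_walk E hacyclic (j - i) h2t (fun k => vv (i + k)) (fun k => ee (i + k))
      (fun k _ => hEn _) (fun k _ => ⟨hmemn _, hvin _⟩)
      (fun k _ => heen _) (fun k _ => hvvn _) ?_
    show vv (i + (j - i)) = vv (i + 0)
    have h4 : i + (j - i) = j := by omega
    rw [h4]; exact hvij.symm
  rcases hij.lt_or_gt with h | h
  · exact main i j h hvij
  · exact main j i h hvij.symm

/-- For a linear hypertree in which every edge has at least two vertices,
the zero locus of any nullvector is a vertex cover: every edge contains a vertex where the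
nullvector vanishes. -/
theorem stmt16 {V : Type*} [Fintype V] [DecidableEq V] (E : Finset (Finset V))
    (hlin : HyperLinear E) (hrank : ∀ e ∈ E, 2 ≤ e.card)
    (hconn : HyperConnected E) (hacyclic : ¬ HasHyperCycle E)
    (x : V → ℂ) (hx : ∀ v : V, linkPoly E x v = 0) :
    ∀ e ∈ E, ∃ v ∈ e, x v = 0 :=
  stmt16_aux E hrank hacyclic x hx
end

section
/- Let 2 ≤ k ≤ n and let y ∈ ℂ^n satisfy (∂e_k/∂x_u)(y) = 0 for all u ∈ [n]. Then at least n − k + 2 coordinates of y are zero. -/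
open MvPolynomial

open Finset in
private lemma pderiv_prod_X {σ : Type*} [DecidableEq σ] (u : σ) (A : Finset σ) :
    pderiv u (∏ i ∈ A, (X i : MvPolynomial σ ℂ)) =
      if u ∈ A then ∏ i ∈ A.erase u, (X i : MvPolynomial σ ℂ) else 0 := by
  induction A using Finset.induction with
  | empty => simp
  | insert _ _ ha =>
    rename_i a A ih
    rw [Finset.prod_insert ha, pderiv_mul, ih]
    by_cases hu : u = a
    · subst hu
      simp [ha, Finset.erase_insert ha]
    · rw [pderiv_X_of_ne (Ne.symm hu), zero_mul, zero_add]
      by_cases hA : u ∈ A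
      · rw [if_pos hA, if_pos (Finset.mem_insert_of_mem hA),
          Finset.erase_insert_of_ne (Ne.symm hu),
          Finset.prod_insert (fun hc => ha (Finset.mem_of_mem_erase hc))]
      · rw [if_neg hA, if_neg (by simp [hu, hA]), mul_zero]

/-- evaluation of elementary symmetric sums over a finset -/
private noncomputable def E {n : ℕ} (y : Fin n → ℂ) (T : Finset (Fin n)) (j : ℕ) : ℂ :=
  ∑ A ∈ T.powersetCard j, ∏ i ∈ A, y i

open Finset in
private lemma powersetCard_erase {n : ℕ} (T : Finset (Fin n)) (u : Fin n) (j : ℕ) :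
    (T.erase u).powersetCard j = (T.powersetCard j).filter (fun A => u ∉ A) := by
  ext A
  simp [mem_powersetCard, Finset.subset_erase, and_assoc, and_comm, and_left_comm]

open Finset in
private lemma eval_pderiv_esymm {n k : ℕ} (y : Fin n → ℂ) (u : Fin n) (hk : 1 ≤ k) :
    eval y (pderiv u (esymm (Fin n) ℂ k)) = E y (univ.erase u) (k - 1) := by
  obtain ⟨k', rfl⟩ : ∃ k', k = k' + 1 := ⟨k - 1, by omega⟩
  rw [esymm, map_sum]
  have : ∀ A ∈ powersetCard (k' + 1) (univ : Finset (Fin n)),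
      pderiv u (∏ i ∈ A, (X i : MvPolynomial (Fin n) ℂ)) =
        if u ∈ A then ∏ i ∈ A.erase u, (X i : MvPolynomial (Fin n) ℂ) else 0 :=
    fun A _ => pderiv_prod_X u A
  rw [Finset.sum_congr rfl this, Finset.sum_ite, Finset.sum_const_zero, add_zero]
  have huniv : (univ : Finset (Fin n)) = insert u (univ.erase u) :=
    (Finset.insert_erase (mem_univ u)).symm
  rw [huniv, powersetCard_succ_insert (Finset.notMem_erase u _)]
  have hfil : ((powersetCard (k' + 1) (univ.erase u) ∪
      (powersetCard k' (univ.erase u)).image (insert u)).filter (fun A => u ∈ A))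
      = (powersetCard k' (univ.erase u)).image (insert u) := by
    ext A
    simp only [Finset.mem_filter, Finset.mem_union, Finset.mem_image, mem_powersetCard]
    constructor
    · rintro ⟨hA | ⟨B, hB, rfl⟩, hu⟩
      · exact absurd (hA.1 hu) (Finset.notMem_erase u _)
      · exact ⟨_, hB, rfl⟩
    · rintro ⟨B, hB, rfl⟩
      exact ⟨Or.inr ⟨B, hB, rfl⟩, Finset.mem_insert_self u B⟩
  rw [hfil, Finset.sum_image (fun B hB C hC hBC => by
    have hB' := (mem_powersetCard.mp hB).1
    have hC' := (mem_powersetCard.mp hC).1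
    have huB : u ∉ B := fun hc => (Finset.notMem_erase u _) (hB' hc)
    have huC : u ∉ C := fun hc => (Finset.notMem_erase u _) (hC' hc)
    rw [← Finset.erase_insert huB, ← Finset.erase_insert huC, hBC])]
  have : ∀ B ∈ powersetCard k' (univ.erase u),
      eval y (∏ i ∈ (insert u B).erase u, (X i : MvPolynomial (Fin n) ℂ)) = ∏ i ∈ B, y i := by
    intro B hB
    have huB : u ∉ B := fun hc => (Finset.notMem_erase u _) ((mem_powersetCard.mp hB).1 hc)
    rw [Finset.erase_insert huB, eval_prod]
    simp
  rw [map_sum, Finset.sum_congr rfl this]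
  simp [E]

open Finset in
private lemma E_rec {n : ℕ} (y : Fin n → ℂ) {T : Finset (Fin n)} {u : Fin n} (hu : u ∈ T)
    (j : ℕ) : E y T (j + 1) = E y (T.erase u) (j + 1) + y u * E y (T.erase u) j := by
  unfold E
  conv_lhs => rw [← Finset.insert_erase hu]
  rw [powersetCard_succ_insert (Finset.notMem_erase u _), Finset.sum_union]
  · congr 1
    rw [Finset.sum_image (fun B hB C hC hBC => by
      have huB : u ∉ B := fun hc => (Finset.notMem_erase u _) ((mem_powersetCard.mp hB).1 hc)
      have huC : u ∉ C := fun hc => (Finset.notMem_erase u _) ((mem_powersetCard.mp hC).1 hc)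
      rw [← Finset.erase_insert huB, ← Finset.erase_insert huC, hBC]), Finset.mul_sum]
    refine Finset.sum_congr rfl fun B hB => ?_
    have huB : u ∉ B := fun hc => (Finset.notMem_erase u _) ((mem_powersetCard.mp hB).1 hc)
    rw [Finset.prod_insert huB]
  · rw [Finset.disjoint_left]
    intro A hA hA2
    obtain ⟨B, hB, rfl⟩ := Finset.mem_image.mp hA2
    have := (mem_powersetCard.mp hA).1 (Finset.mem_insert_self u B)
    exact (Finset.notMem_erase u _) this

open Finset in
private lemma E_sum {n : ℕ} (y : Fin n → ℂ) (T : Finset (Fin n)) (j : ℕ) :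
    ∑ u ∈ T, E y (T.erase u) j = ((T.card - j : ℕ) : ℂ) * E y T j := by
  unfold E
  have : ∀ u ∈ T, ∑ A ∈ (T.erase u).powersetCard j, ∏ i ∈ A, y i
      = ∑ A ∈ T.powersetCard j, if u ∉ A then ∏ i ∈ A, y i else 0 := by
    intro u _
    rw [powersetCard_erase, Finset.sum_filter]
  rw [Finset.sum_congr rfl this, Finset.sum_comm]
  rw [Finset.mul_sum]
  refine Finset.sum_congr rfl fun A hA => ?_
  obtain ⟨hAT, hAc⟩ := mem_powersetCard.mp hA
  rw [Finset.sum_ite, Finset.sum_const_zero, add_zero, Finset.sum_const,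
    ← Finset.sdiff_eq_filter, Finset.card_sdiff_of_subset hAT, hAc, nsmul_eq_mul]

open Finset in
private lemma E_restrict {n : ℕ} (y : Fin n → ℂ) (T : Finset (Fin n)) (j : ℕ) :
    E y T j = E y (T ∩ Finset.univ.filter (fun i => y i ≠ 0)) j := by
  unfold E
  refine (Finset.sum_subset (Finset.powersetCard_mono Finset.inter_subset_left) ?_).symm
  intro A hA hA2
  obtain ⟨hAT, hAc⟩ := mem_powersetCard.mp hA
  have : ∃ i ∈ A, y i = 0 := by
    by_contra hc
    push_neg at hc
    exact hA2 (mem_powersetCard.mpr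
      ⟨fun i hi => Finset.mem_inter.mpr ⟨hAT hi, by simp [hc i hi]⟩, hAc⟩)
  obtain ⟨i, hi, hyi⟩ := this
  exact Finset.prod_eq_zero hi hyi

/-- If 2 ≤ k ≤ n and y ∈ ℂⁿ is a common zero of all partial derivatives of
the k-th elementary symmetric polynomial, then at least n − k + 2 coordinates of y are
zero. -/
theorem stmt18 (n k : ℕ) (hk : 2 ≤ k) (hkn : k ≤ n) (y : Fin n → ℂ)
    (h : ∀ u : Fin n, eval y (pderiv u (esymm (Fin n) ℂ k)) = 0) :
    n - k + 2 ≤ {i : Fin n | y i = 0}.ncard := by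
  classical
  set S : Finset (Fin n) := Finset.univ.filter (fun i => y i ≠ 0) with hSdef
  have hSmem : ∀ i, i ∈ S ↔ y i ≠ 0 := fun i => by simp [hSdef]
  have hcard : S.card ≤ k - 2 := by
    by_contra hm
    push_neg at hm
    have hmge : k - 1 ≤ S.card := by omega
    -- basic consequence of h
    have h0 : ∀ u : Fin n, E y (S.erase u) (k - 1) = 0 := by
      intro u
      have hu := h u
      rw [eval_pderiv_esymm y u (by omega), E_restrict] at hu
      have : (Finset.univ.erase u) ∩ S = S.erase u := by
        ext i; simp [hSdef, and_comm]
      rwa [this] at hu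
    have hS0 : E y S (k - 1) = 0 := by
      by_cases hSuniv : S = Finset.univ
      · have hsum := E_sum y S (k - 1)
        rw [Finset.sum_congr rfl (fun u _ => h0 u), Finset.sum_const_zero] at hsum
        have hc : (S.card - (k - 1) : ℕ) ≠ 0 := by
          have : S.card = n := by rw [hSuniv]; simp
          omega
        have := hsum.symm
        rcases mul_eq_zero.mp this with hx | hx
        · exact absurd (Nat.cast_eq_zero.mp hx) hc
        · exact hx
      · obtain ⟨u, _, hu⟩ : ∃ u ∈ Finset.univ, u ∉ S := by
          by_contra hc
          push_neg at hc
          exact hSuniv (Finset.eq_univ_iff_forall.mpr fun i => hc i (Finset.mem_univ i))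
        have := h0 u
        rwa [Finset.erase_eq_of_notMem hu] at this
    have main : ∀ d, d ≤ k - 1 →
        (∀ u ∈ S, E y (S.erase u) (k - 1 - d) = 0) ∧ E y S (k - 1 - d) = 0 := by
      intro d
      induction d with
      | zero => exact fun _ => ⟨fun u _ => h0 u, hS0⟩
      | succ d ih =>
        intro hd
        obtain ⟨ih1, ih2⟩ := ih (by omega)
        have hj : k - 1 - d = (k - 1 - (d + 1)) + 1 := by omega
        have step1 : ∀ u ∈ S, E y (S.erase u) (k - 1 - (d + 1)) = 0 := by
          intro u hu
          have hrec := E_rec y hu (k - 1 - (d + 1))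
          rw [← hj, ih2, ih1 u hu, zero_add] at hrec
          have hyu : y u ≠ 0 := (hSmem u).1 hu
          exact (mul_eq_zero.mp hrec.symm).resolve_left hyu
        refine ⟨step1, ?_⟩
        have hsum := E_sum y S (k - 1 - (d + 1))
        rw [Finset.sum_congr rfl (fun u hu => step1 u hu), Finset.sum_const_zero] at hsum
        have hc : (S.card - (k - 1 - (d + 1)) : ℕ) ≠ 0 := by omega
        rcases mul_eq_zero.mp hsum.symm with hx | hx
        · exact absurd (Nat.cast_eq_zero.mp hx) hc
        · exact hx
    obtain ⟨h1, -⟩ := main (k - 1) le_rfl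
    obtain ⟨u, hu⟩ : S.Nonempty := Finset.card_pos.mp (by omega)
    have := h1 u hu
    rw [Nat.sub_self] at this
    simp [E, Finset.powersetCard_zero] at this
  have hnc : {i : Fin n | y i = 0}.ncard = (Finset.univ.filter (fun i => y i = 0)).card := by
    rw [← Set.ncard_coe_finset]
    congr 1
    ext i; simp
  have hsplit := Finset.card_filter_add_card_filter_not
    (s := (Finset.univ : Finset (Fin n))) (p := fun i => y i = 0)
  have hScard : S.card = (Finset.univ.filter (fun i => ¬ y i = 0)).card := by rw [hSdef]
  simp only [Finset.card_univ, Fintype.card_fin] at hsplit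
  omega
end

section
/- Let K be the complete k-uniform hypergraph on n vertices, 2 ≤ k ≤ n, and U ⊆ [n]. Then U is a stalled (SZF-closed) set for the hypergraph skew zero forcing rule if and only if |U| ∉ {n−k, n−k+1}. -/
open Finset

private lemma choose_eq_one_iff' (m r : ℕ) (hr : 1 ≤ r) : m.choose r = 1 ↔ m = r := by
  constructor
  · intro h
    by_contra hne
    rcases lt_or_gt_of_ne hne with hlt | hgt
    · rw [Nat.choose_eq_zero_of_lt hlt] at h; omega
    · obtain ⟨a, rfl⟩ : ∃ a, m = a + 1 := ⟨m - 1, by omega⟩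
      obtain ⟨b, rfl⟩ : ∃ b, r = b + 1 := ⟨r - 1, by omega⟩
      have hp := Nat.choose_succ_succ a b
      simp only [Nat.succ_eq_add_one] at hp
      have h1 : 0 < a.choose b := Nat.choose_pos (by omega)
      have h2 : 0 < a.choose (b+1) := Nat.choose_pos (by omega)
      omega
  · rintro rfl; exact Nat.choose_self m

private lemma count_eq (n k : ℕ) (hk0 : 1 ≤ k) (U : Finset (Fin n)) (v : Fin n) :
    (Finset.univ.filter
        (fun e : Finset (Fin n) => e.card = k ∧ v ∈ e ∧ e.erase v ∩ U = ∅)).card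
      = Nat.choose ((Uᶜ.erase v).card) (k - 1) := by
  rw [← Finset.card_powersetCard]
  apply Finset.card_bij (fun e _ => e.erase v)
  · intro e he
    simp only [mem_filter, mem_univ, true_and] at he
    obtain ⟨hc, hv, hU⟩ := he
    rw [Finset.mem_powersetCard]
    constructor
    · intro x hx
      rw [Finset.mem_erase] at hx ⊢
      refine ⟨hx.1, ?_⟩
      rw [Finset.mem_compl]
      intro hxU
      have : x ∈ e.erase v ∩ U := Finset.mem_inter.mpr ⟨Finset.mem_erase.mpr hx, hxU⟩
      simp [hU] at this
    · rw [Finset.card_erase_of_mem hv, hc]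
  · intro e he f hf h
    simp only [mem_filter, mem_univ, true_and] at he hf
    have := Finset.insert_erase he.2.1
    rw [← this, h, Finset.insert_erase hf.2.1]
  · intro S hS
    rw [Finset.mem_powersetCard] at hS
    obtain ⟨hsub, hcard⟩ := hS
    have hvS : v ∉ S := fun h => by
      have := hsub h; simp [Finset.mem_erase] at this
    refine ⟨insert v S, ?_, ?_⟩
    · simp only [mem_filter, mem_univ, true_and]
      refine ⟨?_, Finset.mem_insert_self v S, ?_⟩
      · rw [Finset.card_insert_of_notMem hvS, hcard]; omega
      · rw [Finset.erase_insert hvS]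
        apply Finset.eq_empty_of_forall_notMem
        intro x hx
        rw [Finset.mem_inter] at hx
        have := hsub hx.1
        rw [Finset.mem_erase, Finset.mem_compl] at this
        exact this.2 hx.2
    · rw [Finset.erase_insert hvS]

/-- For the complete k-uniform hypergraph on [n] (2 ≤ k ≤ n), a set U of
vertices is stalled (SZF-closed) — i.e., for every vertex v, the number of edges e
containing v with (e \ {v}) ∩ U = ∅ is not equal to 1 — iff |U| ∉ {n−k, n−k+1}. -/
theorem stmt19 (n k : ℕ) (hk : 2 ≤ k) (hkn : k ≤ n) (U : Finset (Fin n)) :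
    (∀ v : Fin n,
      (Finset.univ.filter
        (fun e : Finset (Fin n) => e.card = k ∧ v ∈ e ∧ e.erase v ∩ U = ∅)).card ≠ 1)
    ↔ (U.card ≠ n - k ∧ U.card ≠ n - k + 1) := by
  have hUn : U.card ≤ n := le_trans (Finset.card_le_card (Finset.subset_univ U)) (by simp)
  have hcompl : Uᶜ.card = n - U.card := by
    rw [Finset.card_compl]; simp
  have hm : ∀ v : Fin n, (Uᶜ.erase v).card =
      if v ∈ U then n - U.card else n - U.card - 1 := by
    intro v
    by_cases hv : v ∈ U
    · rw [Finset.erase_eq_of_notMem (by simp [hv]), hcompl, if_pos hv]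
    · rw [Finset.card_erase_of_mem (by simp [hv]), hcompl, if_neg hv]
  simp only [count_eq n k (by omega) U]
  constructor
  · intro h
    constructor
    · intro hU
      -- pick v ∉ U
      have hlt : U.card < n := by omega
      obtain ⟨v, hv⟩ : ∃ v : Fin n, v ∉ U := by
        by_contra hc
        push_neg at hc
        have : U = Finset.univ := Finset.eq_univ_of_forall hc
        rw [this] at hlt; simp at hlt
      have := h v
      rw [hm v, if_neg hv] at this
      exact this ((choose_eq_one_iff' _ _ (by omega)).mpr (by omega))
    · intro hU
      obtain ⟨v, hv⟩ : ∃ v, v ∈ U := by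
        apply Finset.Nonempty.exists_mem
        rw [← Finset.card_pos]; omega
      have := h v
      rw [hm v, if_pos hv] at this
      exact this ((choose_eq_one_iff' _ _ (by omega)).mpr (by omega))
  · rintro ⟨h1, h2⟩ v hcontra
    rw [hm v] at hcontra
    rw [choose_eq_one_iff' _ _ (by omega)] at hcontra
    by_cases hv : v ∈ U
    · rw [if_pos hv] at hcontra; omega
    · rw [if_neg hv] at hcontra
      have : U.card < n := by
        by_contra hc
        have : U = Finset.univ := Finset.eq_univ_of_card _ (by simp; omega)
        rw [this] at hv; simp at hv
      omega
end
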